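/- arXiv:2006.10307 — 5 statements merged into one kernel-verified Lean document; each statement's English description precedes it below -/
import Mathlib

section
/- Let A = (a_1,...,a_n) be a configuration of n > d+1 points in ℝ^d, and let B ⊂ [n] be a set of d+1 indices such that the points (a_i)_{i∈B} are affinely independent. Then for every x in the convex hull of A there exists an index b ∈ B such that (i) a_b and x lie in the same closed halfspace determined by the affine hyperplane spanned by {a_i : i ∈ B \ {b}}, and (ii) x lies in the convex hull of the points {a_i : i ∈ [n] \ {b}}. -/
/-- **Carathéodory-type lemma.** For a configuration of `n > d+1` points in `ℝ^d` and a
set `B` of `d+1` indices of affinely independent points, every `x` in the convex hull of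
the configuration admits an index `b ∈ B` such that `a b` and `x` lie in the same closed
halfspace of the hyperplane spanned by the points of `B \ {b}`, and `x` lies in the
convex hull of the points indexed by `[n] \ {b}`. -/
theorem caratheodory_type (n d : ℕ) (hn : d + 1 < n) (a : Fin n → (Fin d → ℝ))
    (B : Finset (Fin n)) (hB : B.card = d + 1)
    (hind : AffineIndependent ℝ (fun i : B => a i))
    (x : Fin d → ℝ) (hx : x ∈ convexHull ℝ (Set.range a)) :
    ∃ b ∈ B,
      (∀ f : (Fin d → ℝ) →ᵃ[ℝ] ℝ, (∀ i ∈ B.erase b, f (a i) = 0) → 0 ≤ f (a b) * f x) ∧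
      x ∈ convexHull ℝ (a '' {i | i ≠ b}) := by
  classical
  -- the points of `B` form an affine basis of `ℝ^d`
  have hspan : affineSpan ℝ (Set.range fun i : B => a i) = ⊤ := by
    rw [hind.affineSpan_eq_top_iff_card_eq_finrank_add_one]
    simp [hB, Module.finrank_fin_fun]
  let bb : AffineBasis B ℝ (Fin d → ℝ) := ⟨fun i => a i, hind, hspan⟩
  -- barycentric coordinates, extended by zero outside `B`
  set T : (Fin d → ℝ) → Fin n → ℝ :=
    fun y i => if h : i ∈ B then bb.coord ⟨i, h⟩ y else 0 with hTdef
  have hT0 : ∀ y : Fin d → ℝ, ∀ i : Fin n, i ∉ B → T y i = 0 := by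
    intro y i hi; simp [hTdef, hi]
  have hTB : ∀ y : Fin d → ℝ, ∀ i : B, T y (i : Fin n) = bb.coord i y := by
    intro y i; simp [hTdef, i.2]
  have hT1 : ∀ y : Fin d → ℝ, ∑ i, T y i = 1 := by
    intro y
    rw [← Finset.sum_subset (Finset.subset_univ B) (fun i _ hi => hT0 y i hi)]
    rw [← Finset.sum_coe_sort B (fun i => T y i)]
    simp only [hTB]
    exact bb.sum_coord_apply_eq_one y
  have hTy : ∀ y : Fin d → ℝ, ∑ i, T y i • a i = y := by
    intro y
    rw [← Finset.sum_subset (Finset.subset_univ B)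
      (fun i _ hi => by rw [hT0 y i hi, zero_smul])]
    rw [← Finset.sum_coe_sort B (fun i => T y i • a i)]
    simp only [hTB]
    exact bb.linear_combination_coord_eq_self y
  set t : Fin n → ℝ := T x with ht
  -- key step: from a nonneg representation and a "direction", produce a representation
  -- avoiding some index of `B` with nonnegative barycentric coordinate
  have key : ∀ v z : Fin n → ℝ, (∀ i, 0 ≤ v i) → ∑ i, v i = 1 → ∑ i, v i • a i = x →
      ∑ i, z i = 0 → ∑ i, z i • a i = 0 → (∃ i, 0 < z i) →
      (∀ i, 0 < z i → i ∈ B ∧ 0 ≤ t i) →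
      ∃ b ∈ B, 0 ≤ t b ∧ ∃ u : Fin n → ℝ,
        (∀ i, 0 ≤ u i) ∧ ∑ i, u i = 1 ∧ ∑ i, u i • a i = x ∧ u b = 0 := by
    intro v z hv0 hv1 hvx hz1 hzx hzpos hside
    set D : Finset (Fin n) := Finset.univ.filter (fun i => 0 < z i) with hD
    have hDne : D.Nonempty := by
      obtain ⟨i, hi⟩ := hzpos
      exact ⟨i, by simp [hD, hi]⟩
    obtain ⟨b, hbD, hbmin⟩ := D.exists_min_image (fun i => v i / z i) hDne
    have hzb : 0 < z b := (Finset.mem_filter.mp hbD).2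
    set L : ℝ := v b / z b with hL
    have hL0 : 0 ≤ L := div_nonneg (hv0 b) hzb.le
    refine ⟨b, (hside b hzb).1, (hside b hzb).2, fun i => v i - L * z i, ?_, ?_, ?_, ?_⟩
    · intro i
      show 0 ≤ v i - L * z i
      by_cases hi : 0 < z i
      · have hle : L ≤ v i / z i := hbmin i (by simp [hD, hi])
        have h2 : L * z i ≤ v i := (le_div_iff₀ hi).mp hle
        linarith
      · push_neg at hi
        have : L * z i ≤ 0 := mul_nonpos_of_nonneg_of_nonpos hL0 hi
        linarith [hv0 i]
    · rw [Finset.sum_sub_distrib, ← Finset.mul_sum, hv1, hz1, mul_zero, sub_zero]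
    · simp_rw [sub_smul, mul_smul]
      rw [Finset.sum_sub_distrib, ← Finset.smul_sum, hvx, hzx, smul_zero, sub_zero]
    · show v b - L * z b = 0
      rw [hL, div_mul_cancel₀ _ (ne_of_gt hzb), sub_self]
  -- a nonnegative representation of x
  rw [convexHull_range_eq_exists_affineCombination] at hx
  obtain ⟨s, w0, hw00, hw01, hw0x⟩ := hx
  set w : Fin n → ℝ := fun i => if i ∈ s then w0 i else 0 with hw
  have hw0 : ∀ i, 0 ≤ w i := by
    intro i; by_cases hi : i ∈ s <;> simp [hw, hi]; exact hw00 i hi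
  have hw1 : ∑ i, w i = 1 := by
    rw [← Finset.sum_subset (Finset.subset_univ s) (fun i _ hi => by simp [hw, hi])]
    rw [← hw01]
    exact Finset.sum_congr rfl (fun i hi => by simp [hw, hi])
  have hwx : ∑ i, w i • a i = x := by
    rw [← Finset.sum_subset (Finset.subset_univ s)
      (fun i _ hi => by simp [hw, hi])]
    rw [← hw0x, Finset.affineCombination_eq_linear_combination s a w0 hw01]
    exact Finset.sum_congr rfl (fun i hi => by simp [hw, hi])
  -- find b and the final representation u
  have main : ∃ b ∈ B, 0 ≤ t b ∧ ∃ u : Fin n → ℝ,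
      (∀ i, 0 ≤ u i) ∧ ∑ i, u i = 1 ∧ ∑ i, u i • a i = x ∧ u b = 0 := by
    by_cases hne : ∀ i, w i = t i
    · -- w coincides with the barycentric coordinates, which are hence nonnegative
      have ht0 : ∀ i, 0 ≤ t i := fun i => (hne i) ▸ hw0 i
      -- pick j outside B
      have hBne : B ≠ Finset.univ := by
        intro h
        rw [h, Finset.card_univ, Fintype.card_fin] at hB
        omega
      obtain ⟨j, hj⟩ : ∃ j, j ∉ B := by
        by_contra h
        push_neg at h
        exact hBne (Finset.eq_univ_iff_forall.mpr h)
      set c : Fin n → ℝ := T (a j) with hc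
      refine key t (fun i => c i - if i = j then 1 else 0) ht0 (hT1 x) (hTy x) ?_ ?_ ?_ ?_
      · rw [Finset.sum_sub_distrib, hT1 (a j), Finset.sum_ite_eq' Finset.univ j (fun _ => (1:ℝ))]
        simp
      · simp_rw [sub_smul]
        rw [Finset.sum_sub_distrib, hTy (a j)]
        have : ∑ i : Fin n, (if i = j then (1:ℝ) else 0) • a i = a j := by
          rw [Finset.sum_eq_single j] <;> simp +contextual
        rw [this, sub_self]
      · -- some coordinate of c on B is positive
        by_contra h
        push_neg at h
        have hle : ∀ i ∈ Finset.univ, c i - (if i = j then (1:ℝ) else 0) ≤ 0 := by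
          intro i _; exact h i
        have hsz : ∑ i, (c i - if i = j then (1:ℝ) else 0) = 0 := by
          rw [Finset.sum_sub_distrib, hT1 (a j),
            Finset.sum_ite_eq' Finset.univ j (fun _ => (1:ℝ))]
          simp
        have hall := (Finset.sum_eq_zero_iff_of_nonpos hle).mp hsz
        have hj' := hall j (Finset.mem_univ j)
        norm_num [hc, hT0 (a j) j hj] at hj'
      · intro i hi
        have hi' : 0 < c i - (if i = j then 1 else 0) := hi
        have hij : i ≠ j := by
          intro h
          rw [h] at hi'
          norm_num [hc, hT0 (a j) j hj] at hi'
        refine ⟨?_, ht0 i⟩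
        by_contra hiB
        rw [hc, hT0 (a j) i hiB] at hi'
        simp [hij] at hi'
    · -- w differs from t; some coordinate satisfies w i < t i
      push_neg at hne
      have hlt : ∃ i, 0 < t i - w i := by
        by_contra h
        push_neg at h
        have hge : ∀ i ∈ Finset.univ, t i ≤ w i := fun i _ => by linarith [h i]
        obtain ⟨i0, hi0⟩ := hne
        have : ∑ i, t i < ∑ i, w i :=
          Finset.sum_lt_sum hge ⟨i0, Finset.mem_univ i0, lt_of_le_of_ne (by linarith [h i0])
            (Ne.symm hi0)⟩
        rw [hT1 x, hw1] at this
        exact absurd this (lt_irrefl 1)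
      refine key w (fun i => t i - w i) hw0 hw1 hwx ?_ ?_ hlt ?_
      · rw [Finset.sum_sub_distrib, hT1 x, hw1, sub_self]
      · simp_rw [sub_smul]
        rw [Finset.sum_sub_distrib, hTy x, hwx, sub_self]
      · intro i hi
        have hi' : 0 < t i - w i := hi
        have htw : w i < t i := by linarith
        have hti : 0 < t i := lt_of_le_of_lt (hw0 i) htw
        refine ⟨?_, hti.le⟩
        by_contra hiB
        rw [show t i = 0 from hT0 x i hiB] at hti
        exact absurd hti (lt_irrefl 0)
  obtain ⟨b, hbB, htb, u, hu0, hu1, hux, hub⟩ := main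
  refine ⟨b, hbB, ?_, ?_⟩
  · -- halfspace condition via barycentric coordinates
    intro f hf
    have hxcomb : Finset.univ.affineCombination ℝ a t = x := by
      rw [Finset.affineCombination_eq_linear_combination _ a t (hT1 x)]
      exact hTy x
    have hfx : f x = t b * f (a b) := by
      rw [← hxcomb, Finset.map_affineCombination _ a t (hT1 x) f,
        Finset.affineCombination_eq_linear_combination _ _ t (hT1 x)]
      rw [Finset.sum_eq_single b]
      · rfl
      · intro i _ hib
        by_cases hiB : i ∈ B
        · have := hf i (Finset.mem_erase.mpr ⟨hib, hiB⟩)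
          simp [Function.comp, this]
        · simp [ht, hT0 x i hiB]
      · intro h; exact absurd (Finset.mem_univ b) h
    rw [hfx]
    nlinarith [sq_nonneg (f (a b)), htb]
  · -- convex hull membership
    have hsum : ∑ i ∈ Finset.univ.erase b, u i = 1 := by
      rw [← hu1, Finset.sum_erase _ (by rw [hub])]
    have hmass : (Finset.univ.erase b).centerMass u a = x := by
      rw [Finset.centerMass_eq_of_sum_1 _ _ hsum, ← hux]
      rw [Finset.sum_erase _ (by rw [hub, zero_smul])]
    rw [← hmass]
    refine Finset.centerMass_mem_convexHull _ (fun i _ => hu0 i) (by rw [hsum]; norm_num) ?_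
    intro i hi
    exact Set.mem_image_of_mem a (Finset.ne_of_mem_erase hi)
end

section
/- Let B and B' be two sets of d+1 indices into a point configuration A in ℝ^d, each indexing affinely independent points, whose lifted vectors v_i = (a_i, 1) ∈ ℝ^{d+1} admit no positive linear dependency of the form ∑_{b∈B} β_b v_b + ∑_{b'∈B'} γ_{b'}(−v_{b'}) = 0 with all β_b, γ_{b'} > 0. Then the simplices Δ_B = conv({a_b : b ∈ B}) and Δ_{B'} = conv({a_{b'} : b' ∈ B'}) have disjoint interiors, separated by a hyperplane. -/
private lemma aux_nonpos {c m : ℝ} (h : ∀ t : ℝ, 0 < t → c + t * m ≤ 0) : c ≤ 0 := by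
  by_contra hc
  push_neg at hc
  have hq0 : (0:ℝ) ≤ |m| := abs_nonneg m
  have ht : 0 < c / (2 * (|m| + 1)) := by positivity
  have h1 := h _ ht
  have hm : -|m| ≤ m := neg_abs_le m
  have ht2 : c / (2 * (|m| + 1)) * (2 * (|m| + 1)) = c := by
    field_simp
  nlinarith [mul_le_mul_of_nonneg_left hm ht.le, ht2, h1, ht, hc]

private lemma lift_linearIndependent {n d : ℕ} (a : Fin n → (Fin d → ℝ)) (B : Finset (Fin n))
    (hiB : AffineIndependent ℝ (fun i : B => a i)) :
    LinearIndependent ℝ (fun i : B => ((a i, 1) : (Fin d → ℝ) × ℝ)) := by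
  rw [Fintype.linearIndependent_iff]
  intro g hg i
  have hg1 : ∑ i : B, g i • a i.1 = 0 := by
    have := congrArg Prod.fst hg
    simpa [Prod.fst_sum] using this
  have hg2 : ∑ i : B, g i = 0 := by
    have := congrArg Prod.snd hg
    simpa [Prod.snd_sum, smul_eq_mul] using this
  exact affineIndependent_iff.1 hiB Finset.univ g hg2 hg1 i (Finset.mem_univ i)

set_option maxHeartbeats 1000000 in
/-- **Separation of simplices.** If the lifted vectors `(a_b, 1)` for `b ∈ B` and the
negated lifted vectors `-(a_{b'}, 1)` for `b' ∈ B'` admit no positive linear dependency,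
then the simplices `conv({a_b : b ∈ B})` and `conv({a_{b'} : b' ∈ B'})` are separated by
an affine hyperplane and have disjoint interiors. (The positive dependency
`∑_{b∈B} β_b (a_b,1) - ∑_{b'∈B'} γ_{b'} (a_{b'},1) = 0` is stated by splitting the lift
into its `ℝ^d`-component and its last (all-ones) component.) -/
theorem simplices_separated (n d : ℕ) (a : Fin n → (Fin d → ℝ))
    (B B' : Finset (Fin n)) (hB : B.card = d + 1) (hB' : B'.card = d + 1)
    (hiB : AffineIndependent ℝ (fun i : B => a i))
    (hiB' : AffineIndependent ℝ (fun i : B' => a i))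
    (hdep : ¬ ∃ β γ : Fin n → ℝ, (∀ b ∈ B, 0 < β b) ∧ (∀ b' ∈ B', 0 < γ b') ∧
      (∑ b ∈ B, β b • a b) - (∑ b' ∈ B', γ b' • a b') = 0 ∧
      (∑ b ∈ B, β b) - (∑ b' ∈ B', γ b') = 0) :
    (∃ f : (Fin d → ℝ) →ᵃ[ℝ] ℝ, f.linear ≠ 0 ∧
      (∀ b ∈ B, 0 ≤ f (a b)) ∧ (∀ b' ∈ B', f (a b') ≤ 0)) ∧
    interior (convexHull ℝ (a '' ↑B)) ∩ interior (convexHull ℝ (a '' ↑B')) = ∅ := by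
  classical
  -- nonemptiness
  have hBne : B.Nonempty := by rw [← Finset.card_pos, hB]; omega
  have hB'ne : B'.Nonempty := by rw [← Finset.card_pos, hB']; omega
  haveI : Nonempty ↥B := ⟨⟨hBne.choose, hBne.choose_spec⟩⟩
  haveI : Nonempty ↥B' := ⟨⟨hB'ne.choose, hB'ne.choose_spec⟩⟩
  -- lifted vectors are bases of ℝ^d × ℝ
  have liB := lift_linearIndependent a B hiB
  have liB' := lift_linearIndependent a B' hiB'
  have hfr : Module.finrank ℝ ((Fin d → ℝ) × ℝ) = d + 1 := by
    simp [Module.finrank_prod]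
  have cardB : Fintype.card ↥B = Module.finrank ℝ ((Fin d → ℝ) × ℝ) := by
    rw [Fintype.card_coe, hB, hfr]
  have cardB' : Fintype.card ↥B' = Module.finrank ℝ ((Fin d → ℝ) × ℝ) := by
    rw [Fintype.card_coe, hB', hfr]
  set bB : Module.Basis ↥B ℝ ((Fin d → ℝ) × ℝ) :=
    basisOfLinearIndependentOfCardEqFinrank liB cardB with hbB
  set bB' : Module.Basis ↥B' ℝ ((Fin d → ℝ) × ℝ) :=
    basisOfLinearIndependentOfCardEqFinrank liB' cardB' with hbB'
  have bB_eq : ∀ i : ↥B, bB i = ((a i, 1) : (Fin d → ℝ) × ℝ) := by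
    intro i
    rw [hbB, coe_basisOfLinearIndependentOfCardEqFinrank]
  have bB'_eq : ∀ i : ↥B', bB' i = ((a i, 1) : (Fin d → ℝ) × ℝ) := by
    intro i
    rw [hbB', coe_basisOfLinearIndependentOfCardEqFinrank]
  -- the open cones
  set C : Set ((Fin d → ℝ) × ℝ) := {x | ∀ i : ↥B, 0 < bB.repr x i} with hC
  set C' : Set ((Fin d → ℝ) × ℝ) := {x | ∀ i : ↥B', 0 < bB'.repr x i} with hC'
  have hCconv : Convex ℝ C := by
    intro x hx y hy s t hs ht hst
    intro i
    have hr : bB.repr (s • x + t • y) i = s * bB.repr x i + t * bB.repr y i := by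
      simp [map_add, map_smul]
    rw [Set.mem_setOf_eq] at hx hy
    show 0 < bB.repr (s • x + t • y) i
    rw [hr]
    rcases hs.lt_or_eq with h | h
    · exact add_pos_of_pos_of_nonneg (mul_pos h (hx i)) (mul_nonneg ht (hy i).le)
    · have hts : t = 1 := by linarith
      rw [← h, hts]
      simpa using hy i
  have hC'conv : Convex ℝ C' := by
    intro x hx y hy s t hs ht hst
    intro i
    have hr : bB'.repr (s • x + t • y) i = s * bB'.repr x i + t * bB'.repr y i := by
      simp [map_add, map_smul]
    rw [Set.mem_setOf_eq] at hx hy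
    show 0 < bB'.repr (s • x + t • y) i
    rw [hr]
    rcases hs.lt_or_eq with h | h
    · exact add_pos_of_pos_of_nonneg (mul_pos h (hx i)) (mul_nonneg ht (hy i).le)
    · have hts : t = 1 := by linarith
      rw [← h, hts]
      simpa using hy i
  have hCopen : IsOpen C := by
    have : C = ⋂ i : ↥B, {x : (Fin d → ℝ) × ℝ | 0 < bB.coord i x} := by
      ext x
      simp [hC, Module.Basis.coord_apply, Set.mem_iInter]
    rw [this]
    exact isOpen_iInter_of_finite fun i =>
      isOpen_lt continuous_const (bB.coord i).continuous_of_finiteDimensional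
  have hC'open : IsOpen C' := by
    have : C' = ⋂ i : ↥B', {x : (Fin d → ℝ) × ℝ | 0 < bB'.coord i x} := by
      ext x
      simp [hC', Module.Basis.coord_apply, Set.mem_iInter]
    rw [this]
    exact isOpen_iInter_of_finite fun i =>
      isOpen_lt continuous_const (bB'.coord i).continuous_of_finiteDimensional
  -- center points
  set zB : (Fin d → ℝ) × ℝ := ∑ i : ↥B, bB i with hzB
  set zB' : (Fin d → ℝ) × ℝ := ∑ i : ↥B', bB' i with hzB'
  have hzB_repr : ∀ i : ↥B, bB.repr zB i = 1 := by
    intro i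
    have h1 : zB = ∑ j : ↥B, (1 : ℝ) • bB j := by simp [hzB]
    rw [h1, Module.Basis.repr_sum_self]
  have hzB'_repr : ∀ i : ↥B', bB'.repr zB' i = 1 := by
    intro i
    have h1 : zB' = ∑ j : ↥B', (1 : ℝ) • bB' j := by simp [hzB']
    rw [h1, Module.Basis.repr_sum_self]
  have hzBC : zB ∈ C := fun i => by rw [hzB_repr i]; norm_num
  have hzB'C' : zB' ∈ C' := fun i => by rw [hzB'_repr i]; norm_num
  -- disjointness from hdep
  have hdisj : Disjoint C C' := by
    rw [Set.disjoint_left]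
    intro x hx hx'
    apply hdep
    rw [Set.mem_setOf_eq] at hx hx'
    refine ⟨fun j => if h : j ∈ B then bB.repr x ⟨j, h⟩ else 0,
            fun j => if h : j ∈ B' then bB'.repr x ⟨j, h⟩ else 0, ?_, ?_, ?_, ?_⟩
    · intro b hb; simpa only [dif_pos hb] using hx ⟨b, hb⟩
    · intro b hb; simpa only [dif_pos hb] using hx' ⟨b, hb⟩
    all_goals {
      have hsum : ∑ i : ↥B, bB.repr x i • ((a i.1, 1) : (Fin d → ℝ) × ℝ) = x := by
        conv_rhs => rw [← bB.sum_repr x]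
        exact Finset.sum_congr rfl fun i _ => by rw [bB_eq i]
      have hsum' : ∑ i : ↥B', bB'.repr x i • ((a i.1, 1) : (Fin d → ℝ) × ℝ) = x := by
        conv_rhs => rw [← bB'.sum_repr x]
        exact Finset.sum_congr rfl fun i _ => by rw [bB'_eq i]
      have h1 : ∑ i : ↥B, bB.repr x i • a i.1 = x.1 := by
        have := congrArg Prod.fst hsum
        simpa [Prod.fst_sum] using this
      have h2 : ∑ i : ↥B, bB.repr x i = x.2 := by
        have := congrArg Prod.snd hsum
        simpa [Prod.snd_sum, smul_eq_mul] using this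
      have h1' : ∑ i : ↥B', bB'.repr x i • a i.1 = x.1 := by
        have := congrArg Prod.fst hsum'
        simpa [Prod.fst_sum] using this
      have h2' : ∑ i : ↥B', bB'.repr x i = x.2 := by
        have := congrArg Prod.snd hsum'
        simpa [Prod.snd_sum, smul_eq_mul] using this
      have e1 : ∑ b ∈ B, (if h : b ∈ B then bB.repr x ⟨b, h⟩ else 0) • a b
          = ∑ i : ↥B, bB.repr x i • a i.1 := by
        rw [← Finset.sum_attach B (fun b => (if h : b ∈ B then bB.repr x ⟨b, h⟩ else 0) • a b),
          ← Finset.univ_eq_attach]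
        exact Finset.sum_congr rfl fun i _ => by rw [dif_pos i.2]
      have e2 : ∑ b ∈ B, (if h : b ∈ B then bB.repr x ⟨b, h⟩ else 0)
          = ∑ i : ↥B, bB.repr x i := by
        rw [← Finset.sum_attach B (fun b => (if h : b ∈ B then bB.repr x ⟨b, h⟩ else 0)),
          ← Finset.univ_eq_attach]
        exact Finset.sum_congr rfl fun i _ => by rw [dif_pos i.2]
      have e1' : ∑ b ∈ B', (if h : b ∈ B' then bB'.repr x ⟨b, h⟩ else 0) • a b
          = ∑ i : ↥B', bB'.repr x i • a i.1 := by
        rw [← Finset.sum_attach B' (fun b => (if h : b ∈ B' then bB'.repr x ⟨b, h⟩ else 0) • a b),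
          ← Finset.univ_eq_attach]
        exact Finset.sum_congr rfl fun i _ => by rw [dif_pos i.2]
      have e2' : ∑ b ∈ B', (if h : b ∈ B' then bB'.repr x ⟨b, h⟩ else 0)
          = ∑ i : ↥B', bB'.repr x i := by
        rw [← Finset.sum_attach B' (fun b => (if h : b ∈ B' then bB'.repr x ⟨b, h⟩ else 0)),
          ← Finset.univ_eq_attach]
        exact Finset.sum_congr rfl fun i _ => by rw [dif_pos i.2]
      first
      | (rw [e1, e1', h1, h1']; simp)
      | (rw [e2, e2', h2, h2']; simp) }
  -- separation
  obtain ⟨g, u, hgC, hgC'⟩ :=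
    geometric_hahn_banach_open_open hCconv hCopen hC'conv hC'open hdisj
  -- cones: scaling stability
  have hCcone : ∀ x ∈ C, ∀ t : ℝ, 0 < t → t • x ∈ C := by
    intro x hx t ht i
    have hr : bB.repr (t • x) i = t * bB.repr x i := by simp [map_smul]
    show 0 < bB.repr (t • x) i
    rw [hr]
    exact mul_pos ht (hx i)
  have hC'cone : ∀ x ∈ C', ∀ t : ℝ, 0 < t → t • x ∈ C' := by
    intro x hx t ht i
    have hr : bB'.repr (t • x) i = t * bB'.repr x i := by simp [map_smul]
    show 0 < bB'.repr (t • x) i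
    rw [hr]
    exact mul_pos ht (hx i)
  -- g is nonpositive on C, nonnegative on C'
  have hgle : ∀ x ∈ C, g x ≤ 0 := by
    intro x hx
    by_contra h
    push_neg at h
    have ht : 0 < (|u| + 1) / g x := by positivity
    have h2 := hgC _ (hCcone x hx _ ht)
    rw [map_smul, smul_eq_mul, div_mul_cancel₀ _ (ne_of_gt h)] at h2
    have := le_abs_self u
    linarith
  have hgge : ∀ y ∈ C', 0 ≤ g y := by
    intro y hy
    by_contra h
    push_neg at h
    have hgy : 0 < -g y := by linarith
    have ht : 0 < (|u| + 1) / (-g y) := by positivity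
    have h2 := hgC' _ (hC'cone y hy _ ht)
    rw [map_smul, smul_eq_mul] at h2
    have he : (|u| + 1) / (-g y) * g y = -(|u| + 1) := by
      field_simp
      rw [div_self h.ne]
    rw [he] at h2
    have := neg_abs_le u
    linarith
  -- values at the lifted points
  have hgvB : ∀ b ∈ B, g ((a b, 1) : (Fin d → ℝ) × ℝ) ≤ 0 := by
    intro b hb
    apply aux_nonpos (m := g zB)
    intro t ht
    have hmem : ((a b, 1) : (Fin d → ℝ) × ℝ) + t • zB ∈ C := by
      intro i
      have hr : bB.repr (((a b, 1) : (Fin d → ℝ) × ℝ) + t • zB) i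
          = bB.repr ((a b, 1) : (Fin d → ℝ) × ℝ) i + t * bB.repr zB i := by
        simp [map_add, map_smul]
      show 0 < bB.repr (((a b, 1) : (Fin d → ℝ) × ℝ) + t • zB) i
      rw [hr, hzB_repr i]
      have h0 : 0 ≤ bB.repr ((a b, 1) : (Fin d → ℝ) × ℝ) i := by
        rw [← bB_eq ⟨b, hb⟩, Module.Basis.repr_self, Finsupp.single_apply]
        split <;> norm_num
      linarith
    have h2 := hgle _ hmem
    rwa [map_add, map_smul, smul_eq_mul] at h2
  have hgvB' : ∀ b ∈ B', 0 ≤ g ((a b, 1) : (Fin d → ℝ) × ℝ) := by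
    intro b hb
    have key : -g ((a b, 1) : (Fin d → ℝ) × ℝ) ≤ 0 := by
      apply aux_nonpos (m := -g zB')
      intro t ht
      have hmem : ((a b, 1) : (Fin d → ℝ) × ℝ) + t • zB' ∈ C' := by
        intro i
        have hr : bB'.repr (((a b, 1) : (Fin d → ℝ) × ℝ) + t • zB') i
            = bB'.repr ((a b, 1) : (Fin d → ℝ) × ℝ) i + t * bB'.repr zB' i := by
          simp [map_add, map_smul]
        show 0 < bB'.repr (((a b, 1) : (Fin d → ℝ) × ℝ) + t • zB') i
        rw [hr, hzB'_repr i]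
        have h0 : 0 ≤ bB'.repr ((a b, 1) : (Fin d → ℝ) × ℝ) i := by
          rw [← bB'_eq ⟨b, hb⟩, Module.Basis.repr_self, Finsupp.single_apply]
          split <;> norm_num
        linarith
      have h2 := hgge _ hmem
      rw [map_add, map_smul, smul_eq_mul] at h2
      linarith
    linarith
  -- construct the affine map
  set L : (Fin d → ℝ) →ₗ[ℝ] (Fin d → ℝ) × ℝ := LinearMap.inl ℝ _ _ with hL
  set f : (Fin d → ℝ) →ᵃ[ℝ] ℝ :=
    { toFun := fun x => -g ((x, 1) : (Fin d → ℝ) × ℝ)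
      linear := -((g : (Fin d → ℝ) × ℝ →ₗ[ℝ] ℝ).comp L)
      map_vadd' := by
        intro p w
        show -g ((w + p, 1) : (Fin d → ℝ) × ℝ)
            = -g ((w, 0) : (Fin d → ℝ) × ℝ) + -g ((p, 1) : (Fin d → ℝ) × ℝ)
        have he : ((w + p, (1 : ℝ)) : (Fin d → ℝ) × ℝ) = (w, (0 : ℝ)) + (p, 1) := by
          simp [Prod.ext_iff]
        rw [he, map_add]
        ring } with hf
  have hfapp : ∀ x : Fin d → ℝ, f x = -g ((x, 1) : (Fin d → ℝ) × ℝ) := fun x => rfl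
  have hflinapp : ∀ w : Fin d → ℝ, f.linear w = -g ((w, 0) : (Fin d → ℝ) × ℝ) := fun w => rfl
  have hgzz : g zB < u ∧ u < g zB' := ⟨hgC zB hzBC, hgC' zB' hzB'C'⟩
  have hflin_ne : f.linear ≠ 0 := by
    intro h0
    have hg0 : ∀ w : Fin d → ℝ, g ((w, 0) : (Fin d → ℝ) × ℝ) = 0 := by
      intro w
      have := congrFun (congrArg DFunLike.coe h0) w
      rw [hflinapp w] at this
      simpa using this
    have hval : ∀ b : Fin n, g ((a b, 1) : (Fin d → ℝ) × ℝ)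
        = g ((0, 1) : (Fin d → ℝ) × ℝ) := by
      intro b
      have he : ((a b, (1 : ℝ)) : (Fin d → ℝ) × ℝ) = (a b, 0) + (0, 1) := by
        simp [Prod.ext_iff]
      rw [he, map_add, hg0]
      ring
    have hc0 : g ((0, 1) : (Fin d → ℝ) × ℝ) = 0 := by
      have h1 := hgvB hBne.choose hBne.choose_spec
      have h2 := hgvB' hB'ne.choose hB'ne.choose_spec
      rw [hval _] at h1 h2
      linarith
    have hgall : ∀ x : (Fin d → ℝ) × ℝ, g x = 0 := by
      intro x
      have he : x = ((x.1, 0) : (Fin d → ℝ) × ℝ) + x.2 • ((0, 1) : (Fin d → ℝ) × ℝ) := by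
        simp [Prod.ext_iff]
      rw [he, map_add, map_smul, hg0, hc0]
      simp
    have ha := hgzz.1
    have hb2 := hgzz.2
    rw [hgall zB] at ha
    rw [hgall zB'] at hb2
    linarith
  have hfB : ∀ b ∈ B, 0 ≤ f (a b) := by
    intro b hb
    rw [hfapp]
    linarith [hgvB b hb]
  have hfB' : ∀ b ∈ B', f (a b) ≤ 0 := by
    intro b hb
    rw [hfapp]
    linarith [hgvB' b hb]
  refine ⟨⟨f, hflin_ne, hfB, hfB'⟩, ?_⟩
  -- disjoint interiors
  rw [Set.eq_empty_iff_forall_notMem]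
  rintro x ⟨hx1, hx2⟩
  have hfpos : ∀ y ∈ convexHull ℝ (a '' ↑B), 0 ≤ f y := by
    intro y hy
    have hsub : a '' ↑B ⊆ f ⁻¹' Set.Ici (0 : ℝ) := by
      rintro _ ⟨b, hb, rfl⟩
      exact hfB b hb
    have hconv : Convex ℝ (f ⁻¹' Set.Ici (0 : ℝ)) := (convex_Ici (0 : ℝ)).affine_preimage f
    exact convexHull_min hsub hconv hy
  have hfneg : ∀ y ∈ convexHull ℝ (a '' ↑B'), f y ≤ 0 := by
    intro y hy
    have hsub : a '' ↑B' ⊆ f ⁻¹' Set.Iic (0 : ℝ) := by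
      rintro _ ⟨b, hb, rfl⟩
      exact hfB' b hb
    have hconv : Convex ℝ (f ⁻¹' Set.Iic (0 : ℝ)) := (convex_Iic (0 : ℝ)).affine_preimage f
    exact convexHull_min hsub hconv hy
  have hU : IsOpen (interior (convexHull ℝ (a '' ↑B)) ∩ interior (convexHull ℝ (a '' ↑B'))) :=
    isOpen_interior.inter isOpen_interior
  obtain ⟨ε, hε, hball⟩ := Metric.isOpen_iff.1 hU x ⟨hx1, hx2⟩
  have hzero : ∀ y ∈ Metric.ball x ε, f y = 0 := by
    intro y hy
    have hy1 := (hball hy).1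
    have hy2 := (hball hy).2
    exact le_antisymm (hfneg y (interior_subset hy2)) (hfpos y (interior_subset hy1))
  apply hflin_ne
  apply LinearMap.ext
  intro w
  set t : ℝ := ε / (2 * (‖w‖ + 1)) with hT
  have ht : 0 < t := by positivity
  have hmem : x + t • w ∈ Metric.ball x ε := by
    rw [Metric.mem_ball, dist_eq_norm]
    have he : x + t • w - x = t • w := by abel
    rw [he, norm_smul, Real.norm_eq_abs, abs_of_pos ht, hT, div_mul_eq_mul_div,
      div_lt_iff₀ (by positivity)]
    nlinarith [norm_nonneg w, hε]
  have h1 : f (x + t • w) = f.linear (t • w) + f x := by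
    have := f.map_vadd x (t • w)
    rw [vadd_eq_add, vadd_eq_add, add_comm (t • w) x] at this
    exact this
  have hx0 : f x = 0 := hzero x (Metric.mem_ball_self hε)
  have hxw0 : f (x + t • w) = 0 := hzero _ hmem
  rw [hxw0, hx0, add_zero, map_smul, smul_eq_mul] at h1
  have : f.linear w = 0 := by
    rcases mul_eq_zero.1 h1.symm with h | h
    · exact absurd h (ne_of_gt ht)
    · exact h
  simpa using this
end

section
/- Let Π_{I,B} and Π_{I',B'} be two full-dimensional parallelepiped tiles of a fine zonotopal tiling sharing a facet Π_{J,C} with C = B ∩ B', |C| = d, and write {b} = B \ B', {b'} = B' \ B. Let N be a nonzero vector normal to the shared facet (⟨v_c, N⟩ = 0 for all c ∈ C) oriented so that ⟨z − z', N⟩ ≥ 0 for all z ∈ Π_{I,B} and z' ∈ Π_{I',B'}. If |I| = |I'| then sign(⟨v_b, N⟩) = −sign(⟨v_{b'}, N⟩), and if |I| ≠ |I'| then sign(⟨v_b, N⟩) = sign(⟨v_{b'}, N⟩). In both cases ⟨v_b, N⟩ ≠ 0 and ⟨v_{b'}, N⟩ ≠ 0. -/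
open Finset

/-- The parallelepiped tile `Π_{I,B} = ∑_{i∈I} v_i + ∑_{b∈B} [0, v_b]`. -/
def tileSet {n : ℕ} {E : Type*} [AddCommGroup E] [Module ℝ E]
    (v : Fin n → E) (I B : Finset (Fin n)) : Set E :=
  {z | ∃ α : Fin n → ℝ, (∀ b ∈ B, α b ∈ Set.Icc (0 : ℝ) 1) ∧
    z = (∑ i ∈ I, v i) + ∑ b ∈ B, α b • v b}

/-- A fine zonotopal tiling of the zonotope `Z(V) = ∑_{i=1}^n [0, v_i]`: a collection of
parallelepiped tiles `Π_{I,B}` with `I ∩ B = ∅`, `|B| = d+1`, `{v_b}_{b∈B}` linearly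
independent, covering `Z(V)` and with pairwise disjoint interiors. -/
structure IsFineZonotopalTiling {n : ℕ} {E : Type*} [AddCommGroup E] [Module ℝ E]
    [TopologicalSpace E] (d : ℕ) (v : Fin n → E)
    (P : Finset (Finset (Fin n) × Finset (Fin n))) : Prop where
  disj : ∀ p ∈ P, Disjoint p.1 p.2
  cardB : ∀ p ∈ P, p.2.card = d + 1
  indep : ∀ p ∈ P, LinearIndependent ℝ (fun b : p.2 => v ↑b)
  cover : (⋃ p ∈ P, tileSet v p.1 p.2) = tileSet v ∅ Finset.univ
  intdisj : ∀ p ∈ P, ∀ q ∈ P, p ≠ q →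
    interior (tileSet v p.1 p.2) ∩ interior (tileSet v q.1 q.2) = ∅

/-- If a family indexed by a (d+1)-element finset is linearly independent in `ℝ^{d+1}`
and `N` is orthogonal to all its members, then `N = 0`. -/
lemma normal_zero_of_orth {n d : ℕ} (v : Fin n → (Fin (d + 1) → ℝ))
    (B : Finset (Fin n)) (hcard : B.card = d + 1)
    (hind : LinearIndependent ℝ (fun b : B => v ↑b))
    (N : Fin (d + 1) → ℝ) (horth : ∀ i ∈ B, ∑ j, N j * v i j = 0) : N = 0 := by
  have hB : B.Nonempty := Finset.card_pos.mp (by omega)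
  have : Nonempty ↥B := ⟨⟨hB.choose, hB.choose_spec⟩⟩
  have hspan : Submodule.span ℝ (Set.range fun b : B => v ↑b) = ⊤ :=
    hind.span_eq_top_of_card_eq_finrank (by
      rw [Fintype.card_coe, hcard, Module.finrank_fintype_fun_eq_card, Fintype.card_fin])
  let F : (Fin (d + 1) → ℝ) →ₗ[ℝ] ℝ :=
    { toFun := fun x => ∑ j, N j * x j
      map_add' := by intro x y; simp [mul_add, Finset.sum_add_distrib]
      map_smul' := by
        intro c x
        simp [Finset.mul_sum, mul_left_comm] }
  have hker : Submodule.span ℝ (Set.range fun b : B => v ↑b) ≤ LinearMap.ker F := by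
    rw [Submodule.span_le]
    rintro x ⟨i, rfl⟩
    exact horth i i.2
  have hFN : F N = 0 := by
    have : N ∈ LinearMap.ker F := hker (hspan ▸ Submodule.mem_top)
    exact this
  have hsum : ∑ j, N j * N j = 0 := hFN
  funext j
  have := (Finset.sum_eq_zero_iff_of_nonneg (fun j _ => mul_self_nonneg (N j))).mp hsum j
    (Finset.mem_univ j)
  have := mul_self_eq_zero.mp this
  simpa using this

/-- **Shared facet sign rule.** Let `Π_{I,B}` and `Π_{I',B'}` be tiles of a fine
zonotopal tiling sharing a facet with `C = B ∩ B'`, `{b} = B \ B'`, `{b'} = B' \ B`,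
and let `N ≠ 0` be a normal to the shared facet oriented so that `⟨z - z', N⟩ ≥ 0` for
`z ∈ Π_{I,B}`, `z' ∈ Π_{I',B'}`. Then `⟨v_b, N⟩` and `⟨v_{b'}, N⟩` are nonzero, with
opposite signs if `|I| = |I'|` and equal signs otherwise. -/
theorem shared_facet_signs (n d : ℕ) (v : Fin n → (Fin (d + 1) → ℝ))
    (P : Finset (Finset (Fin n) × Finset (Fin n)))
    (hP : IsFineZonotopalTiling d v P)
    (I B I' B' : Finset (Fin n)) (hmem : (I, B) ∈ P) (hmem' : (I', B') ∈ P)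
    (hne : (I, B) ≠ (I', B'))
    (b b' : Fin n) (hbB : b ∈ B) (hb'B' : b' ∈ B')
    (hBb : B \ B' = {b}) (hB'b' : B' \ B = {b'})
    (hCcard : (B ∩ B').card = d)
    (hshare : I = I' ∨ I = insert b' I' ∨ I' = insert b I ∨ insert b I = insert b' I')
    (N : Fin (d + 1) → ℝ) (hN0 : N ≠ 0)
    (hNC : ∀ c ∈ B ∩ B', ∑ j, N j * v c j = 0)
    (hsep : ∀ z ∈ tileSet v I B, ∀ z' ∈ tileSet v I' B', 0 ≤ ∑ j, N j * (z j - z' j)) :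
    (∑ j, N j * v b j) ≠ 0 ∧ (∑ j, N j * v b' j) ≠ 0 ∧
    (I.card = I'.card →
      Real.sign (∑ j, N j * v b j) = -Real.sign (∑ j, N j * v b' j)) ∧
    (I.card ≠ I'.card →
      Real.sign (∑ j, N j * v b j) = Real.sign (∑ j, N j * v b' j)) := by
  -- basic combinatorics
  have hbB' : b ∉ B' := by
    have : b ∈ B \ B' := hBb ▸ Finset.mem_singleton_self b
    exact (Finset.mem_sdiff.mp this).2
  have hb'B : b' ∉ B := by
    have : b' ∈ B' \ B := hB'b' ▸ Finset.mem_singleton_self b'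
    exact (Finset.mem_sdiff.mp this).2
  have hbC : b ∉ B ∩ B' := fun h => hbB' (Finset.mem_inter.mp h).2
  have hb'C : b' ∉ B ∩ B' := fun h => hb'B (Finset.mem_inter.mp h).1
  have hBins : B = insert b (B ∩ B') := by
    ext x
    simp only [Finset.mem_insert, Finset.mem_inter]
    constructor
    · intro hx
      by_cases hx' : x ∈ B'
      · exact Or.inr ⟨hx, hx'⟩
      · exact Or.inl (Finset.mem_singleton.mp (hBb ▸ Finset.mem_sdiff.mpr ⟨hx, hx'⟩))
    · rintro (rfl | ⟨h, _⟩) <;> [exact hbB; exact h]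
  have hB'ins : B' = insert b' (B ∩ B') := by
    ext x
    simp only [Finset.mem_insert, Finset.mem_inter]
    constructor
    · intro hx
      by_cases hx' : x ∈ B
      · exact Or.inr ⟨hx', hx⟩
      · exact Or.inl (Finset.mem_singleton.mp (hB'b' ▸ Finset.mem_sdiff.mpr ⟨hx, hx'⟩))
    · rintro (rfl | ⟨_, h⟩) <;> [exact hb'B'; exact h]
  have hbI : b ∉ I := fun h =>
    (Finset.disjoint_left.mp (hP.disj (I, B) hmem)) h hbB
  have hb'I' : b' ∉ I' := fun h =>
    (Finset.disjoint_left.mp (hP.disj (I', B') hmem')) h hb'B'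
  set β := ∑ j, N j * v b j with hβdef
  set β' := ∑ j, N j * v b' j with hβ'def
  set S := ∑ j, N j * ∑ i ∈ I, v i j with hSdef
  set S' := ∑ j, N j * ∑ i ∈ I', v i j with hS'def
  -- membership of the edge points
  have hz : ∀ t : ℝ, t ∈ Set.Icc (0:ℝ) 1 → ((∑ i ∈ I, v i) + t • v b) ∈ tileSet v I B := by
    intro t ht
    refine ⟨fun i => if i = b then t else 0, fun i _ => ?_, ?_⟩
    · dsimp only
      split
      · exact ht
      · exact ⟨le_refl 0, zero_le_one⟩
    · have hz0 : ∑ c ∈ B ∩ B', (if c = b then t else (0:ℝ)) • v c = 0 :=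
        Finset.sum_eq_zero fun c hc => by
          rw [if_neg (by rintro rfl; exact hbC hc), zero_smul]
      rw [hBins, Finset.sum_insert hbC]
      beta_reduce
      rw [if_pos rfl, hz0, add_zero]
  have hz' : ∀ s : ℝ, s ∈ Set.Icc (0:ℝ) 1 → ((∑ i ∈ I', v i) + s • v b') ∈ tileSet v I' B' := by
    intro s hs
    refine ⟨fun i => if i = b' then s else 0, fun i _ => ?_, ?_⟩
    · dsimp only
      split
      · exact hs
      · exact ⟨le_refl 0, zero_le_one⟩
    · have hz0 : ∑ c ∈ B ∩ B', (if c = b' then s else (0:ℝ)) • v c = 0 :=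
        Finset.sum_eq_zero fun c hc => by
          rw [if_neg (by rintro rfl; exact hb'C hc), zero_smul]
      rw [hB'ins, Finset.sum_insert hb'C]
      beta_reduce
      rw [if_pos rfl, hz0, add_zero]
  -- the key separation inequalities
  have key : ∀ t ∈ Set.Icc (0:ℝ) 1, ∀ s ∈ Set.Icc (0:ℝ) 1, S' + s * β' ≤ S + t * β := by
    intro t ht s hs
    have h := hsep _ (hz t ht) _ (hz' s hs)
    have hcalc : ∑ j, N j * (((∑ i ∈ I, v i) + t • v b) j - ((∑ i ∈ I', v i) + s • v b') j)
        = (S + t * β) - (S' + s * β') := by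
      rw [hSdef, hS'def, hβdef, hβ'def]
      simp only [Pi.add_apply, Pi.smul_apply, smul_eq_mul, Finset.sum_apply]
      calc ∑ j, N j * ((∑ c ∈ I, v c j + t * v b j) - (∑ c ∈ I', v c j + s * v b' j))
          = ∑ j, ((N j * ∑ c ∈ I, v c j + t * (N j * v b j))
              - (N j * ∑ c ∈ I', v c j + s * (N j * v b' j))) :=
            Finset.sum_congr rfl fun j _ => by ring
        _ = _ := by
            rw [Finset.sum_sub_distrib, Finset.sum_add_distrib, Finset.sum_add_distrib,
              ← Finset.mul_sum, ← Finset.mul_sum]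
    rw [hcalc] at h
    linarith
  -- nonvanishing of β and β'
  have hβne : β ≠ 0 := by
    intro h0
    apply hN0
    refine normal_zero_of_orth v B (hP.cardB (I, B) hmem) (hP.indep (I, B) hmem) N ?_
    intro i hi
    rw [hBins, Finset.mem_insert] at hi
    rcases hi with rfl | hi
    · exact h0
    · exact hNC i hi
  have hβ'ne : β' ≠ 0 := by
    intro h0
    apply hN0
    refine normal_zero_of_orth v B' (hP.cardB (I', B') hmem') (hP.indep (I', B') hmem') N ?_
    intro i hi
    rw [hB'ins, Finset.mem_insert] at hi
    rcases hi with rfl | hi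
    · exact h0
    · exact hNC i hi
  have h00 := key 0 ⟨le_refl 0, zero_le_one⟩ 0 ⟨le_refl 0, zero_le_one⟩
  have h01 := key 0 ⟨le_refl 0, zero_le_one⟩ 1 ⟨zero_le_one, le_refl 1⟩
  have h10 := key 1 ⟨zero_le_one, le_refl 1⟩ 0 ⟨le_refl 0, zero_le_one⟩
  have h11 := key 1 ⟨zero_le_one, le_refl 1⟩ 1 ⟨zero_le_one, le_refl 1⟩
  simp only [one_mul, zero_mul, add_zero] at h00 h01 h10 h11
  refine ⟨hβne, hβ'ne, ?_, ?_⟩ <;> intro hcard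
  · -- |I| = |I'| : opposite signs
    rcases hshare with rfl | hII' | hI'I | hins
    · -- I = I'
      have hSS' : S = S' := rfl
      have hβpos : 0 < β := lt_of_le_of_ne (by linarith) (Ne.symm hβne)
      have hβ'neg : β' < 0 := lt_of_le_of_ne (by linarith) hβ'ne
      rw [Real.sign_of_pos hβpos, Real.sign_of_neg hβ'neg, neg_neg]
    · -- I = insert b' I' : cards differ, contradiction
      exfalso
      rw [hII', Finset.card_insert_of_notMem hb'I'] at hcard
      omega
    · exfalso
      rw [hI'I, Finset.card_insert_of_notMem hbI] at hcard
      omega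
    · -- insert b I = insert b' I'
      have hSS' : S + β = S' + β' := by
        have h1 : ∑ j, N j * ∑ i ∈ insert b I, v i j = ∑ j, N j * ∑ i ∈ insert b' I', v i j := by
          rw [hins]
        simp only [Finset.sum_insert hbI, Finset.sum_insert hb'I', mul_add,
          Finset.sum_add_distrib] at h1
        rw [hSdef, hS'def, hβdef, hβ'def]
        linarith
      have hβ'pos : 0 < β' := lt_of_le_of_ne (by linarith) (Ne.symm hβ'ne)
      have hβneg : β < 0 := lt_of_le_of_ne (by linarith) hβne
      rw [Real.sign_of_pos hβ'pos, Real.sign_of_neg hβneg]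
  · -- |I| ≠ |I'| : equal signs
    rcases hshare with rfl | hII' | hI'I | hins
    · exact absurd rfl hcard
    · -- I = insert b' I' : S = S' + β'
      have hSS' : S = S' + β' := by
        rw [hSdef, hII', hβ'def, hS'def]
        simp only [Finset.sum_insert hb'I', mul_add, Finset.sum_add_distrib]
        ring
      have hβpos : 0 < β := lt_of_le_of_ne (by linarith) (Ne.symm hβne)
      have hβ'pos : 0 < β' := lt_of_le_of_ne (by linarith) (Ne.symm hβ'ne)
      rw [Real.sign_of_pos hβpos, Real.sign_of_pos hβ'pos]
    · -- I' = insert b I : S' = S + β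
      have hSS' : S' = S + β := by
        rw [hS'def, hI'I, hβdef, hSdef]
        simp only [Finset.sum_insert hbI, mul_add, Finset.sum_add_distrib]
        ring
      have hβneg : β < 0 := lt_of_le_of_ne (by linarith) hβne
      have hβ'neg : β' < 0 := lt_of_le_of_ne (by linarith) hβ'ne
      rw [Real.sign_of_neg hβneg, Real.sign_of_neg hβ'neg]
    · exfalso
      apply hcard
      have := congrArg Finset.card hins
      rw [Finset.card_insert_of_notMem hbI, Finset.card_insert_of_notMem hb'I'] at this
      omega
end

section
/- Let P(h) be a regular fine zonotopal tiling of Z(V) induced by a generic height function h, and let x ∈ ℝ^d be a point not lying on the affine span of any internal facet's points. Orient each edge of the adjacency graph G of P(h) (tiles as vertices, shared internal facets as edges) from Π_{I,B} to Π_{I',B'} if, for the facet normal N with ⟨N, (x,1)⟩ > 0, one has ⟨N, z' − z⟩ > 0 for z ∈ Π_{I,B}, z' ∈ Π_{I',B'}. Then the resulting directed graph (G, o_x) is acyclic. -/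
open Finset

/-- The oriented adjacency relation on the tiles of a fine zonotopal tiling of the
lifted configuration: `p → q` iff `p` and `q` are distinct tiles of `P` sharing a facet
(i.e. `B \ {b} = B' \ {b'}` with the corresponding relation between `I` and `I'`), and
the facet normal `N` whose pairing with the lift `(x,1)` is positive points from `p`
to `q`. -/
def stepRel {n d : ℕ} (a : Fin n → (Fin d → ℝ))
    (P : Finset (Finset (Fin n) × Finset (Fin n))) (x : Fin d → ℝ)
    (p q : Finset (Fin n) × Finset (Fin n)) : Prop :=
  p ∈ P ∧ q ∈ P ∧ p ≠ q ∧
  ∃ b ∈ p.2, ∃ b' ∈ q.2, p.2.erase b = q.2.erase b' ∧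
    (p.1 = q.1 ∨ p.1 = insert b' q.1 ∨ q.1 = insert b p.1 ∨
      insert b p.1 = insert b' q.1) ∧
    ∃ N : Fin (d + 1) → ℝ, N ≠ 0 ∧
      (∀ c ∈ p.2.erase b, ∑ j, N j * (Fin.snoc (a c) 1 : Fin (d + 1) → ℝ) j = 0) ∧
      0 < ∑ j, N j * (Fin.snoc x 1 : Fin (d + 1) → ℝ) j ∧
      ∀ z ∈ tileSet (fun i => (Fin.snoc (a i) 1 : Fin (d + 1) → ℝ)) p.1 p.2,
        ∀ z' ∈ tileSet (fun i => (Fin.snoc (a i) 1 : Fin (d + 1) → ℝ)) q.1 q.2,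
          0 ≤ ∑ j, N j * (z' j - z j)

lemma aux_orth {d m : ℕ} (v : Fin m → Fin (d+1) → ℝ) (B : Finset (Fin m))
    (hcard : B.card = d+1) (hind : LinearIndependent ℝ (fun b : B => v ↑b))
    (w : Fin (d+1) → ℝ) (hw : ∀ b ∈ B, ∑ j, w j * v b j = 0) : w = 0 := by
  haveI : Nonempty B := Finset.Nonempty.to_subtype (Finset.card_pos.mp (by omega))
  have hspan : Submodule.span ℝ (Set.range (fun b : B => v ↑b)) = ⊤ := by
    apply hind.span_eq_top_of_card_eq_finrank
    simp [hcard]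
  let L : (Fin (d+1) → ℝ) →ₗ[ℝ] ℝ :=
    { toFun := fun e => ∑ j, w j * e j
      map_add' := by intro e f; simp [mul_add, Finset.sum_add_distrib]
      map_smul' := by intro c e; simp [Finset.mul_sum, mul_left_comm] }
  have hker : Submodule.span ℝ (Set.range (fun b : B => v ↑b)) ≤ LinearMap.ker L := by
    rw [Submodule.span_le]
    rintro _ ⟨b, rfl⟩
    exact hw b b.2
  have hw0 : L w = 0 := by
    have : w ∈ LinearMap.ker L := hker (hspan ▸ Submodule.mem_top)
    exact this
  have hw0' : ∑ j, w j * w j = 0 := hw0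
  have : ∀ j ∈ Finset.univ, w j * w j = 0 := by
    rw [Finset.sum_eq_zero_iff_of_nonneg (fun j _ => mul_self_nonneg (w j))] at hw0'
    exact hw0'
  funext j
  exact mul_self_eq_zero.mp (this j (Finset.mem_univ j))

lemma aux_sum_split {d : ℕ} (y : Fin (d+2) → ℝ) (w : Fin d → ℝ) (t : ℝ) :
    ∑ j, y j * (Fin.snoc (Fin.snoc w t) 1 : Fin (d+2) → ℝ) j
      = (∑ j, (Fin.snoc (fun k : Fin d => y (k.castSucc.castSucc)) (y (Fin.last (d+1))) : Fin (d+1) → ℝ) j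
            * (Fin.snoc w 1 : Fin (d+1) → ℝ) j) + y ⟨d, Nat.lt_succ_of_lt (Nat.lt_succ_self d)⟩ * t := by
  rw [Fin.sum_univ_castSucc (n := d+1), Fin.sum_univ_castSucc (n := d)]
  rw [Fin.sum_univ_castSucc (n := d)]
  have hd : (⟨d, by omega⟩ : Fin (d+2)) = (Fin.last d).castSucc := rfl
  simp [Fin.snoc_castSucc, Fin.snoc_last, hd]
  ring

lemma aux_colinear {d m : ℕ} (v : Fin m → Fin (d+1) → ℝ) (B : Finset (Fin m))
    (hcard : B.card = d+1) (hind : LinearIndependent ℝ (fun b : B => v ↑b))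
    (b : Fin m) (hb : b ∈ B) (N u : Fin (d+1) → ℝ) (hN0 : N ≠ 0)
    (hNC : ∀ c ∈ B.erase b, ∑ j, N j * v c j = 0)
    (huC : ∀ c ∈ B.erase b, ∑ j, u j * v c j = 0) :
    (∑ j, N j * v b j) ≠ 0 ∧
      ∀ j, u j = ((∑ j, u j * v b j) / (∑ j, N j * v b j)) * N j := by
  have hNb : (∑ j, N j * v b j) ≠ 0 := by
    intro he
    apply hN0
    apply aux_orth v B hcard hind
    intro c hc
    rcases eq_or_ne c b with rfl | hcb
    · exact he
    · exact hNC c (Finset.mem_erase.mpr ⟨hcb, hc⟩)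
  refine ⟨hNb, ?_⟩
  set μ : ℝ := (∑ j, u j * v b j) / (∑ j, N j * v b j) with hμ
  have hwz : (fun j => u j - μ * N j) = 0 := by
    apply aux_orth v B hcard hind
    intro c hc
    have hsplit : ∑ j, (u j - μ * N j) * v c j
        = (∑ j, u j * v c j) - μ * (∑ j, N j * v c j) := by
      simp [sub_mul, Finset.sum_sub_distrib, Finset.mul_sum, mul_assoc]
    rcases eq_or_ne c b with rfl | hcb
    · rw [hsplit, hμ, div_mul_cancel₀ _ hNb, sub_self]
    · rw [hsplit, huC c (Finset.mem_erase.mpr ⟨hcb, hc⟩),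
        hNC c (Finset.mem_erase.mpr ⟨hcb, hc⟩)]
      ring
  intro j
  have := congrFun hwz j
  simp only [Pi.zero_apply] at this
  linarith

/-- **Acyclicity of the oriented adjacency graph** for a regular fine zonotopal tiling
`P(h)` induced by a generic height function `h`: for every generic point `x` (not lying
on the affine span of any internal facet's points), the orientation `o_x` of the
adjacency graph of `P(h)` induced by `x` admits no directed cycle. -/
theorem regular_tiling_graph_acyclic (n d : ℕ) (a : Fin n → (Fin d → ℝ))
    (h : Fin n → ℝ)
    (hgen : ∀ T : Finset (Fin n), T.card = d + 2 →
      ¬ AffineIndependent ℝ (fun i : T => (Fin.snoc (a ↑i) (h ↑i) : Fin (d + 1) → ℝ)) →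
      ∃ N : Fin (d + 1) → ℝ, N ≠ 0 ∧ N ⟨d, by omega⟩ = 0 ∧ ∃ c : ℝ,
        ∀ i ∈ T, ∑ j, N j * (Fin.snoc (a i) (h i) : Fin (d + 1) → ℝ) j = c)
    (P : Finset (Finset (Fin n) × Finset (Fin n)))
    (hP : IsFineZonotopalTiling d (fun i => (Fin.snoc (a i) 1 : Fin (d + 1) → ℝ)) P)
    (hreg : ∀ p ∈ P, ∃ y : Fin (d + 2) → ℝ, 0 < y ⟨d, by omega⟩ ∧
      ∀ i : Fin n,
        (i ∈ p.1 →
          0 < ∑ j, y j * (Fin.snoc (Fin.snoc (a i) (h i)) 1 : Fin (d + 2) → ℝ) j) ∧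
        (i ∈ p.2 →
          ∑ j, y j * (Fin.snoc (Fin.snoc (a i) (h i)) 1 : Fin (d + 2) → ℝ) j = 0) ∧
        (i ∉ p.1 ∪ p.2 →
          ∑ j, y j * (Fin.snoc (Fin.snoc (a i) (h i)) 1 : Fin (d + 2) → ℝ) j < 0))
    (x : Fin d → ℝ)
    (hx : ∀ p ∈ P, ∀ b ∈ p.2,
      (∃ q ∈ P, q ≠ p ∧ ∃ b' ∈ q.2, p.2.erase b = q.2.erase b') →
      x ∉ (affineSpan ℝ (a '' ↑(p.2.erase b)) : Set (Fin d → ℝ))) :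
    ∀ p, ¬ Relation.TransGen (stepRel a P x) p p := by
  classical
  choose! y hy using hreg
  set V : Fin n → Fin (d+1) → ℝ := fun i => Fin.snoc (a i) 1 with hVdef
  set g : (Finset (Fin n) × Finset (Fin n)) → Fin (d+1) → ℝ := fun p => fun j =>
    (Fin.snoc (fun k : Fin d => y p (k.castSucc.castSucc)) (y p (Fin.last (d+1)))
      : Fin (d+1) → ℝ) j / y p ⟨d, by omega⟩ with hgdef
  -- key pairing facts for each tile
  have hgp : ∀ p ∈ P, ∀ i : Fin n,
      (i ∈ p.1 → -h i < ∑ j, g p j * V i j) ∧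
      (i ∈ p.2 → ∑ j, g p j * V i j = -h i) ∧
      (i ∉ p.1 ∪ p.2 → ∑ j, g p j * V i j < -h i) := by
    intro p hp i
    obtain ⟨h0, hyi⟩ := hy p hp
    have hsplit := aux_sum_split (y p) (a i) (h i)
    have hdot : ∑ j, g p j * V i j
        = (∑ j, (Fin.snoc (fun k : Fin d => y p (k.castSucc.castSucc))
            (y p (Fin.last (d+1))) : Fin (d+1) → ℝ) j * V i j) / y p ⟨d, by omega⟩ := by
      rw [Finset.sum_div]
      refine Finset.sum_congr rfl fun j _ => ?_
      rw [hgdef]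
      ring
    have hcomm := mul_comm (h i) (y p ⟨d, by omega⟩)
    refine ⟨fun hi => ?_, fun hi => ?_, fun hi => ?_⟩
    · have := (hyi i).1 hi
      rw [hsplit] at this
      rw [hdot, lt_div_iff₀ h0]
      nlinarith
    · have := (hyi i).2.1 hi
      rw [hsplit] at this
      rw [hdot, div_eq_iff (ne_of_gt h0)]
      nlinarith
    · have := (hyi i).2.2 hi
      rw [hsplit] at this
      rw [hdot, div_lt_iff₀ h0]
      nlinarith
  set X : Fin (d+1) → ℝ := Fin.snoc x 1 with hXdef
  set φ : (Finset (Fin n) × Finset (Fin n)) → ℝ := fun p => ∑ j, g p j * X j with hφdef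
  have hstep : ∀ p q, stepRel a P x p q → φ p < φ q := by
    rintro p q ⟨hpP, hqP, hne, b, hb, b', hb', hBB, hII, N, hN0, hNC, hNx, hNz⟩
    have hdisjp := hP.disj p hpP
    have hdisjq := hP.disj q hqP
    have hbp1 : b ∉ p.1 := fun hc => (Finset.disjoint_left.mp hdisjp hc hb).elim
    have hb'q1 : b' ∉ q.1 := fun hc => (Finset.disjoint_left.mp hdisjq hc hb').elim
    have hbb' : b ≠ b' := by
      intro e
      subst e
      have hBeq : p.2 = q.2 := by
        rw [← Finset.insert_erase hb, hBB, Finset.insert_erase hb']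
      have hbq1 : b ∉ q.1 := fun hc => (Finset.disjoint_left.mp hdisjq hc hb').elim
      rcases hII with h1 | h1 | h1 | h1
      · exact hne (Prod.ext h1 hBeq)
      · exact hbp1 (h1 ▸ Finset.mem_insert_self b q.1)
      · exact hbq1 (h1 ▸ Finset.mem_insert_self b p.1)
      · have hpq1 : p.1 = q.1 := by
          rw [← Finset.erase_insert hbp1, h1, Finset.erase_insert hbq1]
        exact hne (Prod.ext hpq1 hBeq)
    have hbq2 : b ∉ q.2 := by
      intro hc
      have : b ∈ q.2.erase b' := Finset.mem_erase.mpr ⟨hbb', hc⟩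
      rw [← hBB] at this
      exact (Finset.notMem_erase b p.2) this
    -- the difference of the tile functionals
    set u : Fin (d+1) → ℝ := fun j => g q j - g p j with hudef
    have hqC : ∀ c ∈ p.2.erase b, c ∈ q.2 := fun c hc =>
      Finset.mem_of_mem_erase (hBB ▸ hc)
    have huC : ∀ c ∈ p.2.erase b, ∑ j, u j * V c j = 0 := by
      intro c hc
      have h1 := ((hgp p hpP c).2.1) (Finset.mem_of_mem_erase hc)
      have h2 := ((hgp q hqP c).2.1) (hqC c hc)
      have : ∑ j, u j * V c j = (∑ j, g q j * V c j) - ∑ j, g p j * V c j := by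
        simp [hudef, sub_mul, Finset.sum_sub_distrib]
      rw [this, h1, h2]
      ring
    obtain ⟨hNb, hcol⟩ :=
      aux_colinear V p.2 (hP.cardB p hpP) (hP.indep p hpP) b hb N u hN0 hNC huC
    have hgpb : ∑ j, g p j * V b j = -h b := (hgp p hpP b).2.1 hb
    have husum : ∑ j, u j * V b j = (∑ j, g q j * V b j) - ∑ j, g p j * V b j := by
      simp [hudef, sub_mul, Finset.sum_sub_distrib]
    -- tile membership helpers
    have hmem0 : ∀ r ∈ P, (∑ i ∈ r.1, V i) ∈ tileSet V r.1 r.2 := by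
      intro r _
      exact ⟨fun _ => 0, fun c _ => by norm_num, by simp⟩
    have hmem1 : ∀ r ∈ P, ∀ c ∈ r.2,
        ((∑ i ∈ r.1, V i) + V c) ∈ tileSet V r.1 r.2 := by
      intro r _ c hc
      refine ⟨fun i => if i = c then 1 else 0, fun e _ => ?_, ?_⟩
      · dsimp only
        split_ifs <;> norm_num
      · have h1 : ∀ e ∈ r.2, (if e = c then (1:ℝ) else 0) • V e
            = if e = c then V e else 0 := by
          intro e _
          split <;> simp
        rw [Finset.sum_congr rfl h1, Finset.sum_ite_eq' r.2 c V, if_pos hc]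
    -- sign analysis by cases on the relation between the I-sets
    have hμpos : 0 < (∑ j, u j * V b j) / (∑ j, N j * V b j) := by
      rcases hII with h1 | h1 | h1 | h1
      · -- p.1 = q.1
        have hbq1 : b ∉ q.1 := h1 ▸ hbp1
        have hun : ∑ j, u j * V b j < 0 := by
          have := (hgp q hqP b).2.2 (by simp [hbq1, hbq2])
          rw [husum, hgpb]; linarith
        have key := hNz ((∑ i ∈ p.1, V i) + V b) (hmem1 p hpP b hb)
          (∑ i ∈ q.1, V i) (hmem0 q hqP)
        have hNle : ∑ j, N j * V b j ≤ 0 := by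
          have heq : ∑ j, N j * ((∑ i ∈ q.1, V i) j - ((∑ i ∈ p.1, V i) + V b) j)
              = -∑ j, N j * V b j := by
            rw [h1, ← Finset.sum_neg_distrib]
            refine Finset.sum_congr rfl fun j _ => ?_
            simp only [Pi.add_apply]
            ring
          rw [heq] at key
          linarith
        exact div_pos_iff.mpr (Or.inr ⟨hun, lt_of_le_of_ne hNle hNb⟩)
      · -- p.1 = insert b' q.1
        have hbq1 : b ∉ q.1 := fun hc => hbp1 (h1 ▸ Finset.mem_insert_of_mem hc)
        have hun : ∑ j, u j * V b j < 0 := by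
          have := (hgp q hqP b).2.2 (by simp [hbq1, hbq2])
          rw [husum, hgpb]; linarith
        have hS : (∑ i ∈ p.1, V i) = V b' + ∑ i ∈ q.1, V i := by
          rw [h1, Finset.sum_insert hb'q1]
        have key := hNz ((∑ i ∈ p.1, V i) + V b) (hmem1 p hpP b hb)
          ((∑ i ∈ q.1, V i) + V b') (hmem1 q hqP b' hb')
        have hNle : ∑ j, N j * V b j ≤ 0 := by
          have heq : ∑ j, N j * (((∑ i ∈ q.1, V i) + V b') j - ((∑ i ∈ p.1, V i) + V b) j)
              = -∑ j, N j * V b j := by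
            rw [hS, ← Finset.sum_neg_distrib]
            refine Finset.sum_congr rfl fun j _ => ?_
            simp only [Pi.add_apply]
            ring
          rw [heq] at key
          linarith
        exact div_pos_iff.mpr (Or.inr ⟨hun, lt_of_le_of_ne hNle hNb⟩)
      · -- q.1 = insert b p.1
        have hbq1 : b ∈ q.1 := h1 ▸ Finset.mem_insert_self b p.1
        have hup : 0 < ∑ j, u j * V b j := by
          have := (hgp q hqP b).1 hbq1
          rw [husum, hgpb]; linarith
        have hS : (∑ i ∈ q.1, V i) = V b + ∑ i ∈ p.1, V i := by
          rw [h1, Finset.sum_insert hbp1]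
        have key := hNz (∑ i ∈ p.1, V i) (hmem0 p hpP)
          (∑ i ∈ q.1, V i) (hmem0 q hqP)
        have hNge : 0 ≤ ∑ j, N j * V b j := by
          have heq : ∑ j, N j * ((∑ i ∈ q.1, V i) j - (∑ i ∈ p.1, V i) j)
              = ∑ j, N j * V b j := by
            rw [hS]
            refine Finset.sum_congr rfl fun j _ => ?_
            simp only [Pi.add_apply]
            ring
          rw [heq] at key
          linarith
        exact div_pos hup (lt_of_le_of_ne hNge (Ne.symm hNb))
      · -- insert b p.1 = insert b' q.1
        have hbq1 : b ∈ q.1 := by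
          have : b ∈ insert b' q.1 := h1 ▸ Finset.mem_insert_self b p.1
          rcases Finset.mem_insert.mp this with h2 | h2
          · exact absurd h2 hbb'
          · exact h2
        have hup : 0 < ∑ j, u j * V b j := by
          have := (hgp q hqP b).1 hbq1
          rw [husum, hgpb]; linarith
        have hS : V b + ∑ i ∈ p.1, V i = V b' + ∑ i ∈ q.1, V i := by
          rw [← Finset.sum_insert hbp1, ← Finset.sum_insert hb'q1, h1]
        have key := hNz (∑ i ∈ p.1, V i) (hmem0 p hpP)
          ((∑ i ∈ q.1, V i) + V b') (hmem1 q hqP b' hb')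
        have hNge : 0 ≤ ∑ j, N j * V b j := by
          have heq : ∑ j, N j * (((∑ i ∈ q.1, V i) + V b') j - (∑ i ∈ p.1, V i) j)
              = ∑ j, N j * V b j := by
            refine Finset.sum_congr rfl fun j _ => ?_
            have hSj := congrFun hS j
            simp only [Pi.add_apply] at hSj ⊢
            have h2 : (∑ i ∈ q.1, V i) j + V b' j = (∑ i ∈ p.1, V i) j + V b j := by
              linarith
            rw [h2]
            ring
          rw [heq] at key
          linarith
        exact div_pos hup (lt_of_le_of_ne hNge (Ne.symm hNb))
    -- conclude
    have hXeq : ∑ j, u j * X j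
        = ((∑ j, u j * V b j) / (∑ j, N j * V b j)) * ∑ j, N j * X j := by
      rw [Finset.mul_sum]
      refine Finset.sum_congr rfl fun j _ => ?_
      rw [hcol j]
      ring
    have hdiff : φ q - φ p = ∑ j, u j * X j := by
      simp [hφdef, hudef, sub_mul, Finset.sum_sub_distrib]
    have : 0 < φ q - φ p := by
      rw [hdiff, hXeq]
      exact mul_pos hμpos hNx
    linarith
  intro p hcyc
  have mono : ∀ r s, Relation.TransGen (stepRel a P x) r s → φ r < φ s := by
    intro r s hrs
    induction hrs with
    | single h' => exact hstep _ _ h'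
    | tail _ h' ih => exact ih.trans (hstep _ _ h')
  exact lt_irrefl _ (mono p p hcyc)
end

section
/- In dimension d = 1, for any fine zonotopal tiling P of Z(V) (regular or not) and any generic point x ∈ ℝ, the directed adjacency graph (G, o_x) with the orientation induced by x is acyclic. -/
open Finset

/-- The oriented adjacency relation induced by a point `x ∈ ℝ` on the tiles of a fine
zonotopal tiling of `Z(V)` for the lifted one-dimensional configuration
`v_i = (a_i, 1) ∈ ℝ²`. -/
def stepRel1 {n : ℕ} (a : Fin n → ℝ)
    (P : Finset (Finset (Fin n) × Finset (Fin n))) (x : ℝ)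
    (p q : Finset (Fin n) × Finset (Fin n)) : Prop :=
  p ∈ P ∧ q ∈ P ∧ p ≠ q ∧
  ∃ b ∈ p.2, ∃ b' ∈ q.2, p.2.erase b = q.2.erase b' ∧
    (p.1 = q.1 ∨ p.1 = insert b' q.1 ∨ q.1 = insert b p.1 ∨
      insert b p.1 = insert b' q.1) ∧
    ∃ N : Fin 2 → ℝ, N ≠ 0 ∧
      (∀ c ∈ p.2.erase b, ∑ j, N j * ![a c, 1] j = 0) ∧
      0 < ∑ j, N j * ![x, 1] j ∧
      ∀ z ∈ tileSet (fun i => ![a i, 1]) p.1 p.2,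
        ∀ z' ∈ tileSet (fun i => ![a i, 1]) q.1 q.2,
          0 ≤ ∑ j, N j * (z' j - z j)

namespace OneDimAux

/-! ### Generic `TransGen` helper lemmas -/

section trans

variable {α β : Type*} {r : α → α → Prop}

lemma transGen_mono_le {f : α → ℕ} (hm : ∀ u v, r u v → f u ≤ f v) :
    ∀ {u v}, Relation.TransGen r u v → f u ≤ f v := by
  intro u v h
  induction h with
  | single h => exact hm _ _ h
  | tail _ h ih => exact le_trans ih (hm _ _ h)

lemma transGen_lt {g : α → ℤ} (hm : ∀ u v, r u v → g u < g v) :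
    ∀ {u v}, Relation.TransGen r u v → g u < g v := by
  intro u v h
  induction h with
  | single h => exact hm _ _ h
  | tail _ h ih => exact lt_trans ih (hm _ _ h)

lemma transGen_restrict {f : α → ℕ} (hm : ∀ u v, r u v → f u ≤ f v) {u v : α}
    (h : Relation.TransGen r u v) :
    f u = f v → Relation.TransGen (fun p q => r p q ∧ f p = f u ∧ f q = f u) u v := by
  induction h with
  | single h => intro hf; exact Relation.TransGen.single ⟨h, rfl, hf.symm⟩
  | @tail b c hT hstep ih =>
      intro hf
      have h1 : f u ≤ f b := transGen_mono_le hm hT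
      have h2 : f b ≤ f c := hm _ _ hstep
      have hb : f b = f u := le_antisymm (by rw [hf]; exact h2) h1
      exact Relation.TransGen.tail (ih hb.symm) ⟨hstep, hb, hf.symm⟩

lemma transGen_map {g : α → β} {r2 : β → β → Prop}
    (hmap : ∀ u v, r u v → r2 (g u) (g v)) :
    ∀ {u v}, Relation.TransGen r u v → Relation.TransGen r2 (g u) (g v) := by
  intro u v h
  induction h with
  | single h => exact Relation.TransGen.single (hmap _ _ h)
  | tail _ h ih => exact Relation.TransGen.tail ih (hmap _ _ h)

end trans

/-! ### Sign helper lemmas -/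

lemma sign_lt {t d e : ℝ} (h1 : 0 < t * e) (h2 : t * d ≤ 0) (h3 : d ≠ 0) : d * e < 0 := by
  rcases lt_trichotomy t 0 with ht | ht | ht
  · have he : e < 0 := by nlinarith
    have hd : 0 < d := by
      rcases h3.lt_or_gt with h | h
      · nlinarith
      · exact h
    nlinarith
  · rw [ht] at h1; simp at h1
  · have he : 0 < e := by nlinarith
    have hd : d < 0 := by
      rcases h3.lt_or_gt with h | h
      · exact h
      · nlinarith
    nlinarith

lemma sign_gt {t d e : ℝ} (h1 : 0 < t * e) (h2 : 0 ≤ t * d) (h3 : d ≠ 0) : 0 < d * e := by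
  rcases lt_trichotomy t 0 with ht | ht | ht
  · have he : e < 0 := by nlinarith
    have hd : d < 0 := by
      rcases h3.lt_or_gt with h | h
      · exact h
      · nlinarith
    nlinarith
  · rw [ht] at h1; simp at h1
  · have he : 0 < e := by nlinarith
    have hd : 0 < d := by
      rcases h3.lt_or_gt with h | h
      · nlinarith
      · exact h
    nlinarith

/-- Minimality of `|x - a c₀|` gives the key product inequality. -/
lemma min_sign {u w : ℝ} (h : u ^ 2 ≤ w ^ 2) : 0 ≤ (w - u) * w := by
  nlinarith [sq_nonneg (w - u), sq_nonneg (w + u)]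

/-! ### The abstract step relation -/

variable {n : ℕ}

/-- Abstract combinatorial step relation extracted from `stepRel1`. -/
def AbsStep (a : Fin n → ℝ) (x : ℝ) (S : Finset (Fin n))
    (p q : Finset (Fin n) × Finset (Fin n)) : Prop :=
  ∃ b b' c : Fin n, b ≠ c ∧ b' ≠ c ∧ b ≠ b' ∧ b ∈ S ∧ b' ∈ S ∧ c ∈ S ∧
    p.1 ⊆ S ∧ p.2 = {b, c} ∧ q.2 = {b', c} ∧
    b ∉ p.1 ∧ c ∉ p.1 ∧ b' ∉ q.1 ∧
    ((q.1 = p.1 ∧ (a b - a c) * (x - a c) < 0 ∧ 0 < (a b' - a c) * (x - a c)) ∨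
     (b' ∈ p.1 ∧ q.1 = p.1.erase b' ∧
        (a b - a c) * (x - a c) < 0 ∧ (a b' - a c) * (x - a c) < 0) ∨
     (q.1 = insert b p.1 ∧
        0 < (a b - a c) * (x - a c) ∧ 0 < (a b' - a c) * (x - a c)) ∨
     (b' ∈ p.1 ∧ q.1 = insert b (p.1.erase b') ∧
        0 < (a b - a c) * (x - a c) ∧ (a b' - a c) * (x - a c) < 0))

/-- Phase of the wire `c₀` in a tile: 1 if active, 2 if used, 0 otherwise. -/
def phi (c₀ : Fin n) (T : Finset (Fin n) × Finset (Fin n)) : ℕ :=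
  if c₀ ∈ T.2 then 1 else if c₀ ∈ T.1 then 2 else 0

lemma phi_eq_one_iff {c₀ : Fin n} {T : Finset (Fin n) × Finset (Fin n)} :
    phi c₀ T = 1 ↔ c₀ ∈ T.2 := by
  unfold phi
  split_ifs with h1 h2 <;> simp [h1]

/-- Sign of wire `k` relative to the active wire `c₀`: whether `a k` lies on the same
side of `a c₀` as `x`. -/
noncomputable def sgn (a : Fin n → ℝ) (x : ℝ) (c₀ k : Fin n) : ℤ :=
  if 0 < (a k - a c₀) * (x - a c₀) then 1 else -1

/-- Potential along the strip of the wire `c₀`. -/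
noncomputable def psi (a : Fin n → ℝ) (x : ℝ) (c₀ : Fin n) (T : Finset (Fin n) × Finset (Fin n)) : ℤ :=
  2 * ∑ k ∈ T.1, sgn a x c₀ k + ∑ j ∈ T.2.erase c₀, sgn a x c₀ j

/-- φ is monotone along abstract steps when `c₀` is a wire closest to `x`. -/
lemma phi_mono {a : Fin n → ℝ} {x : ℝ} {S : Finset (Fin n)} {c₀ : Fin n}
    (hmin : ∀ i ∈ S, (x - a c₀) ^ 2 ≤ (x - a i) ^ 2)
    {u v : Finset (Fin n) × Finset (Fin n)} (h : AbsStep a x S u v) :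
    phi c₀ u ≤ phi c₀ v := by
  obtain ⟨b, b', c, hbc, hb'c, hbb', hbS, hb'S, hcS, hp1S, hp2, hq2, hbp1, hcp1, hb'q1,
    hcase⟩ := h
  have hK : 0 ≤ (a c₀ - a c) * (x - a c) := by
    have := min_sign (u := x - a c₀) (w := x - a c) (hmin c hcS)
    have he : (x - a c) - (x - a c₀) = a c₀ - a c := by ring
    rwa [he] at this
  by_cases hcc : c₀ = c
  · -- step across c₀: phase 1 → 1
    have h1 : phi c₀ u = 1 := phi_eq_one_iff.mpr (by rw [hp2, hcc]; simp)
    have h2 : phi c₀ v = 1 := phi_eq_one_iff.mpr (by rw [hq2, hcc]; simp)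
    omega
  by_cases hcb : c₀ = b
  · -- c₀ is the exiting wire: phase 1 → 2
    subst hcb
    have h1 : phi c₀ u = 1 := phi_eq_one_iff.mpr (by rw [hp2]; simp)
    have hsign : 0 < (a c₀ - a c) * (x - a c) := by
      rcases hcase with ⟨_, hs, _⟩ | ⟨_, _, hs, _⟩ | ⟨_, hs, _⟩ | ⟨_, _, hs, _⟩
      · exact absurd hs (not_lt.mpr hK)
      · exact absurd hs (not_lt.mpr hK)
      · exact hs
      · exact hs
    have hv1 : c₀ ∈ v.1 := by
      rcases hcase with ⟨_, hs, _⟩ | ⟨_, _, hs, _⟩ | ⟨hq1, _, _⟩ | ⟨_, hq1, _, _⟩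
      · exact absurd hs (not_lt.mpr hK)
      · exact absurd hs (not_lt.mpr hK)
      · rw [hq1]; exact mem_insert_self _ _
      · rw [hq1]; exact mem_insert_self _ _
    have hv2 : c₀ ∉ v.2 := by
      rw [hq2]
      intro hmem
      rcases mem_insert.mp hmem with h' | h'
      · exact hbb' h'
      · exact hbc (mem_singleton.mp h')
    have h2 : phi c₀ v = 2 := by unfold phi; rw [if_neg hv2, if_pos hv1]
    omega
  by_cases hcb' : c₀ = b'
  · -- c₀ is the entering wire: phase 0 → 1
    subst hcb'
    have h2 : phi c₀ v = 1 := phi_eq_one_iff.mpr (by rw [hq2]; simp)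
    have hu2 : c₀ ∉ u.2 := by
      rw [hp2]
      intro hmem
      rcases mem_insert.mp hmem with h' | h'
      · exact hbb' h'.symm
      · exact hb'c (mem_singleton.mp h')
    have hu1 : c₀ ∉ u.1 := by
      rcases hcase with ⟨hq1, _, _⟩ | ⟨_, _, _, hs⟩ | ⟨hq1, _, _⟩ | ⟨_, _, _, hs⟩
      · rw [← hq1]; exact hb'q1
      · exact absurd hs (not_lt.mpr hK)
      · intro hmem; exact hb'q1 (by rw [hq1]; exact mem_insert_of_mem hmem)
      · exact absurd hs (not_lt.mpr hK)
    have h1 : phi c₀ u = 0 := by unfold phi; rw [if_neg hu2, if_neg hu1]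
    omega
  · -- c₀ is a spectator
    have hu2 : c₀ ∉ u.2 := by
      rw [hp2]
      intro hmem
      rcases mem_insert.mp hmem with h' | h'
      · exact hcb h'
      · exact hcc (mem_singleton.mp h')
    have hv2 : c₀ ∉ v.2 := by
      rw [hq2]
      intro hmem
      rcases mem_insert.mp hmem with h' | h'
      · exact hcb' h'
      · exact hcc (mem_singleton.mp h')
    have hiff : (c₀ ∈ u.1) ↔ (c₀ ∈ v.1) := by
      rcases hcase with ⟨hq1, _⟩ | ⟨_, hq1, _⟩ | ⟨hq1, _⟩ | ⟨_, hq1, _⟩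
      · rw [hq1]
      · rw [hq1]; simp [Finset.mem_erase, hcb']
      · rw [hq1]; simp [Finset.mem_insert, hcb]
      · rw [hq1]; simp [Finset.mem_insert, Finset.mem_erase, hcb, hcb']
    unfold phi
    rw [if_neg hu2, if_neg hv2]
    rcases Decidable.em (c₀ ∈ u.1) with h' | h'
    · rw [if_pos h', if_pos (hiff.mp h')]
    · rw [if_neg h', if_neg (fun hh => h' (hiff.mpr hh))]

/-- ψ strictly increases along abstract steps that keep `c₀` active. -/
lemma psi_step {a : Fin n → ℝ} {x : ℝ} {S : Finset (Fin n)} {c₀ : Fin n}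
    {u v : Finset (Fin n) × Finset (Fin n)} (h : AbsStep a x S u v)
    (hu : c₀ ∈ u.2) (hv : c₀ ∈ v.2) :
    psi a x c₀ u < psi a x c₀ v := by
  obtain ⟨b, b', c, hbc, hb'c, hbb', hbS, hb'S, hcS, hp1S, hp2, hq2, hbp1, hcp1, hb'q1,
    hcase⟩ := h
  have hcc : c₀ = c := by
    rw [hp2] at hu
    rcases mem_insert.mp hu with h' | h'
    · exfalso
      rw [hq2] at hv
      rcases mem_insert.mp hv with h'' | h''
      · exact hbb' (h'.symm.trans h'')
      · exact hbc (h'.symm.trans (mem_singleton.mp h''))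
    · exact (mem_singleton.mp h')
  subst hcc
  have hbu : u.2.erase c₀ = {b} := by
    rw [hp2, Finset.erase_insert_of_ne hbc, Finset.erase_singleton, insert_empty_eq]
  have hbv : v.2.erase c₀ = {b'} := by
    rw [hq2, Finset.erase_insert_of_ne hb'c, Finset.erase_singleton, insert_empty_eq]
  unfold psi
  rw [hbu, hbv, Finset.sum_singleton, Finset.sum_singleton]
  rcases hcase with ⟨hq1, hs1, hs2⟩ | ⟨hb'p1, hq1, hs1, hs2⟩ | ⟨hq1, hs1, hs2⟩ |
    ⟨hb'p1, hq1, hs1, hs2⟩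
  · -- case A : same I, b exits down, b' enters from 0
    have e1 : sgn a x c₀ b = -1 := by unfold sgn; rw [if_neg (not_lt.mpr hs1.le)]
    have e2 : sgn a x c₀ b' = 1 := by unfold sgn; rw [if_pos hs2]
    rw [hq1, e1, e2]; omega
  · -- case B : I loses b'
    have e1 : sgn a x c₀ b = -1 := by unfold sgn; rw [if_neg (not_lt.mpr hs1.le)]
    have e2 : sgn a x c₀ b' = -1 := by unfold sgn; rw [if_neg (not_lt.mpr hs2.le)]
    have hsum : ∑ k ∈ v.1, sgn a x c₀ k = (∑ k ∈ u.1, sgn a x c₀ k) - sgn a x c₀ b' := by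
      rw [hq1]; exact Finset.sum_erase_eq_sub hb'p1
    rw [hsum, e1, e2]; omega
  · -- case C : I gains b
    have e1 : sgn a x c₀ b = 1 := by unfold sgn; rw [if_pos hs1]
    have e2 : sgn a x c₀ b' = 1 := by unfold sgn; rw [if_pos hs2]
    have hsum : ∑ k ∈ v.1, sgn a x c₀ k = sgn a x c₀ b + ∑ k ∈ u.1, sgn a x c₀ k := by
      rw [hq1]; exact Finset.sum_insert hbp1
    rw [hsum, e1, e2]; omega
  · -- case D : I loses b', gains b
    have e1 : sgn a x c₀ b = 1 := by unfold sgn; rw [if_pos hs1]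
    have e2 : sgn a x c₀ b' = -1 := by unfold sgn; rw [if_neg (not_lt.mpr hs2.le)]
    have hbe : b ∉ u.1.erase b' := fun hh => hbp1 (Finset.mem_of_mem_erase hh)
    have hsum : ∑ k ∈ v.1, sgn a x c₀ k
        = sgn a x c₀ b + ((∑ k ∈ u.1, sgn a x c₀ k) - sgn a x c₀ b') := by
      rw [hq1, Finset.sum_insert hbe, Finset.sum_erase_eq_sub hb'p1]
    rw [hsum, e1, e2]; omega

/-- Steps not involving `c₀` project to abstract steps on `S.erase c₀`. -/
lemma proj_step {a : Fin n → ℝ} {x : ℝ} {S : Finset (Fin n)} {c₀ : Fin n}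
    {u v : Finset (Fin n) × Finset (Fin n)} (h : AbsStep a x S u v)
    (hu : c₀ ∉ u.2) (hv : c₀ ∉ v.2) :
    AbsStep a x (S.erase c₀) (u.1.erase c₀, u.2) (v.1.erase c₀, v.2) := by
  obtain ⟨b, b', c, hbc, hb'c, hbb', hbS, hb'S, hcS, hp1S, hp2, hq2, hbp1, hcp1, hb'q1,
    hcase⟩ := h
  have hbne : b ≠ c₀ := fun hh => hu (by rw [hp2, ← hh]; exact mem_insert_self _ _)
  have hcne : c ≠ c₀ := fun hh => hu (by rw [hp2, ← hh]; exact mem_insert_of_mem (mem_singleton_self c))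
  have hb'ne : b' ≠ c₀ := fun hh => hv (by rw [hq2, ← hh]; exact mem_insert_self _ _)
  refine ⟨b, b', c, hbc, hb'c, hbb', mem_erase.mpr ⟨hbne, hbS⟩, mem_erase.mpr ⟨hb'ne, hb'S⟩,
    mem_erase.mpr ⟨hcne, hcS⟩, ?_, hp2, hq2,
    fun hh => hbp1 (Finset.mem_of_mem_erase hh),
    fun hh => hcp1 (Finset.mem_of_mem_erase hh),
    fun hh => hb'q1 (Finset.mem_of_mem_erase hh), ?_⟩
  · intro i hi
    exact mem_erase.mpr ⟨(mem_erase.mp hi).1, hp1S ((mem_erase.mp hi).2)⟩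
  rcases hcase with ⟨hq1, hs1, hs2⟩ | ⟨hb'p1, hq1, hs1, hs2⟩ | ⟨hq1, hs1, hs2⟩ |
    ⟨hb'p1, hq1, hs1, hs2⟩
  · exact Or.inl ⟨by rw [hq1], hs1, hs2⟩
  · refine Or.inr (Or.inl ⟨mem_erase.mpr ⟨hb'ne, hb'p1⟩, ?_, hs1, hs2⟩)
    rw [hq1]
    ext i
    simp only [Finset.mem_erase]
    tauto
  · refine Or.inr (Or.inr (Or.inl ⟨?_, hs1, hs2⟩))
    rw [hq1]
    ext i
    simp only [Finset.mem_erase, Finset.mem_insert]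
    constructor
    · rintro ⟨hi, h' | h'⟩
      · exact Or.inl h'
      · exact Or.inr ⟨hi, h'⟩
    · rintro (h' | ⟨hi, h'⟩)
      · exact ⟨h' ▸ hbne, Or.inl h'⟩
      · exact ⟨hi, Or.inr h'⟩
  · refine Or.inr (Or.inr (Or.inr ⟨mem_erase.mpr ⟨hb'ne, hb'p1⟩, ?_, hs1, hs2⟩))
    rw [hq1]
    ext i
    simp only [Finset.mem_erase, Finset.mem_insert]
    constructor
    · rintro ⟨hi, h' | ⟨h2, h3⟩⟩
      · exact Or.inl h'
      · exact Or.inr ⟨h2, hi, h3⟩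
    · rintro (h' | ⟨h2, hi, h3⟩)
      · exact ⟨h' ▸ hbne, Or.inl h'⟩
      · exact ⟨hi, Or.inr ⟨h2, h3⟩⟩

/-- Acyclicity of the abstract step relation. -/
lemma abs_acyclic (a : Fin n → ℝ) (x : ℝ) (S : Finset (Fin n)) :
    ∀ p, ¬ Relation.TransGen (AbsStep a x S) p p := by
  induction S using Finset.strongInductionOn with
  | _ S ih =>
    intro p hcyc
    have hex : ∃ u v, AbsStep a x S u v := by
      cases hcyc with
      | single h => exact ⟨p, p, h⟩
      | tail _ h => exact ⟨_, p, h⟩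
    obtain ⟨u0, v0, b0, _, _, _, _, _, hb0S, _⟩ := hex
    obtain ⟨c₀, hc₀S, hminim⟩ :=
      S.exists_min_image (fun i => (x - a i) ^ 2) ⟨b0, hb0S⟩
    have hmono : ∀ u v, AbsStep a x S u v → phi c₀ u ≤ phi c₀ v :=
      fun u v h => phi_mono (fun i hi => hminim i hi) h
    have hcyc' := transGen_restrict hmono hcyc rfl
    by_cases h2 : c₀ ∈ p.2
    · -- all steps keep c₀ active; ψ strictly increases
      have hphip : phi c₀ p = 1 := phi_eq_one_iff.mpr h2
      have hlt : ∀ u v,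
          (AbsStep a x S u v ∧ phi c₀ u = phi c₀ p ∧ phi c₀ v = phi c₀ p) →
          psi a x c₀ u < psi a x c₀ v := by
        rintro u v ⟨hstep, huφ, hvφ⟩
        exact psi_step hstep (phi_eq_one_iff.mp (huφ.trans hphip))
          (phi_eq_one_iff.mp (hvφ.trans hphip))
      exact absurd (transGen_lt hlt hcyc') (lt_irrefl _)
    · -- all steps avoid c₀; project to the smaller wire set
      have hphip : phi c₀ p ≠ 1 := fun hh => h2 (phi_eq_one_iff.mp hh)
      have hmap : ∀ u v,
          (AbsStep a x S u v ∧ phi c₀ u = phi c₀ p ∧ phi c₀ v = phi c₀ p) →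
          AbsStep a x (S.erase c₀) (u.1.erase c₀, u.2) (v.1.erase c₀, v.2) := by
        rintro u v ⟨hstep, huφ, hvφ⟩
        refine proj_step hstep ?_ ?_
        · exact fun hh => hphip (huφ ▸ phi_eq_one_iff.mpr hh)
        · exact fun hh => hphip (hvφ ▸ phi_eq_one_iff.mpr hh)
      have := transGen_map hmap hcyc'
      exact ih (S.erase c₀) (Finset.erase_ssubset hc₀S) _ this

/-- Extraction: a `stepRel1` step yields an abstract step. -/
lemma extract {n : ℕ} {a : Fin n → ℝ} {P : Finset (Finset (Fin n) × Finset (Fin n))}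
    (hP : IsFineZonotopalTiling 1 (fun i => ![a i, 1]) P) {x : ℝ}
    {p q : Finset (Fin n) × Finset (Fin n)} (h : stepRel1 a P x p q) :
    AbsStep a x Finset.univ p q := by
  obtain ⟨hp, hq, hpq, b, hb, b', hb', herase, hIc, N, hN0, hNc, hNx, hsep⟩ := h
  -- identify the third wire c
  have hcard : p.2.card = 2 := hP.cardB p hp
  have hc1 : (p.2.erase b).card = 1 := by
    rw [Finset.card_erase_of_mem hb, hcard]
  obtain ⟨c, hc⟩ := Finset.card_eq_one.mp hc1
  have hbc : b ≠ c := by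
    intro hEq
    have h0 := Finset.notMem_erase b p.2
    rw [hc, hEq] at h0
    exact h0 (mem_singleton_self c)
  have hcp2 : c ∈ p.2 :=
    Finset.mem_of_mem_erase (by rw [hc]; exact mem_singleton_self c)
  have hp2 : p.2 = {b, c} := by
    rw [← Finset.insert_erase hb, hc]
  have hq2e : q.2.erase b' = {c} := by rw [← herase, hc]
  have hb'c : b' ≠ c := by
    intro hEq
    have h0 := Finset.notMem_erase b' q.2
    rw [hq2e, hEq] at h0
    exact h0 (mem_singleton_self c)
  have hcq2 : c ∈ q.2 :=
    Finset.mem_of_mem_erase (by rw [hq2e]; exact mem_singleton_self c)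
  have hq2 : q.2 = {b', c} := by
    rw [← Finset.insert_erase hb', hq2e]
  -- disjointness facts
  have hbp1 : b ∉ p.1 := Finset.disjoint_right.mp (hP.disj p hp) hb
  have hcp1 : c ∉ p.1 := Finset.disjoint_right.mp (hP.disj p hp) hcp2
  have hb'q1 : b' ∉ q.1 := Finset.disjoint_right.mp (hP.disj q hq) hb'
  -- independence gives distinct a-values within a tile
  have hval : ∀ r ∈ P, ∀ i ∈ r.2, ∀ j ∈ r.2, i ≠ j → a i ≠ a j := by
    intro r hr i hi j hj hij hEq
    have hinj := (hP.indep r hr).injective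
    have hvv : (fun s : r.2 => ![a (s : Fin n), 1]) ⟨i, hi⟩
        = (fun s : r.2 => ![a (s : Fin n), 1]) ⟨j, hj⟩ := by
      simp only
      rw [hEq]
    exact hij (Subtype.ext_iff.mp (hinj hvv))
  have hdb : a b - a c ≠ 0 := sub_ne_zero.mpr (hval p hp b hb c hcp2 hbc)
  have hdb' : a b' - a c ≠ 0 := sub_ne_zero.mpr (hval q hq b' hb' c hcq2 hb'c)
  -- structure of the normal vector N
  have hNc' := hNc c (by rw [hc]; exact mem_singleton_self c)
  rw [Fin.sum_univ_two] at hNc'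
  simp only [Matrix.cons_val_zero, Matrix.cons_val_one, Matrix.head_cons, mul_one] at hNc'
  set t := N 0 with htdef
  have hN1 : N 1 = -(t * a c) := by linarith
  rw [Fin.sum_univ_two] at hNx
  simp only [Matrix.cons_val_zero, Matrix.cons_val_one, Matrix.head_cons, mul_one] at hNx
  have htx : 0 < t * (x - a c) := by
    have hh : t * (x - a c) = t * x + N 1 := by rw [hN1]; ring
    rw [hh]; exact hNx
  -- corner membership
  have hcorner : ∀ (I : Finset (Fin n)) (b₁ c₁ : Fin n), (α : ℝ) → α ∈ Set.Icc (0:ℝ) 1 →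
      ((∑ i ∈ I, ![a i, (1:ℝ)]) +
        ∑ j ∈ ({b₁, c₁} : Finset (Fin n)), (if j = b₁ then α else 0) • ![a j, (1:ℝ)])
        ∈ tileSet (fun i => ![a i, 1]) I {b₁, c₁} := by
    intro I b₁ c₁ α hα
    refine ⟨fun j => if j = b₁ then α else 0, ?_, rfl⟩
    intro j hj
    by_cases hjb : j = b₁
    · simpa [hjb] using hα
    · simp [hjb, Set.mem_Icc]
  -- dot product of N with a corner
  have hdot : ∀ (I : Finset (Fin n)) (b₁ c₁ : Fin n), b₁ ≠ c₁ → ∀ α : ℝ,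
      (∑ j, N j * (((∑ i ∈ I, ![a i, (1:ℝ)]) +
        ∑ j' ∈ ({b₁, c₁} : Finset (Fin n)), (if j' = b₁ then α else 0) • ![a j', (1:ℝ)]) j))
      = t * ((∑ i ∈ I, (a i - a c)) + α * (a b₁ - a c)) := by
    intro I b₁ c₁ hbc₁ α
    have e1 : (if b₁ = b₁ then α else (0:ℝ)) = α := if_pos rfl
    have e2 : (if c₁ = b₁ then α else (0:ℝ)) = 0 := if_neg (Ne.symm hbc₁)
    rw [Fin.sum_univ_two]
    have hz0 : ((∑ i ∈ I, ![a i, (1:ℝ)]) +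
        ∑ j' ∈ ({b₁, c₁} : Finset (Fin n)), (if j' = b₁ then α else 0) • ![a j', (1:ℝ)]) 0
        = (∑ i ∈ I, a i) + α * a b₁ := by
      simp only [Pi.add_apply, Finset.sum_apply, Pi.smul_apply, smul_eq_mul,
        Matrix.cons_val_zero, Finset.sum_pair hbc₁, e1, e2, eq_self_iff_true, if_true]
      ring
    have hz1 : ((∑ i ∈ I, ![a i, (1:ℝ)]) +
        ∑ j' ∈ ({b₁, c₁} : Finset (Fin n)), (if j' = b₁ then α else 0) • ![a j', (1:ℝ)]) 1
        = (I.card : ℝ) + α := by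
      simp only [Pi.add_apply, Finset.sum_apply, Pi.smul_apply, smul_eq_mul,
        Matrix.cons_val_one, Matrix.head_cons, Finset.sum_pair hbc₁, e1, e2, Matrix.cons_val_zero,
        eq_self_iff_true, if_true, mul_one, Finset.sum_const, nsmul_eq_mul]
      ring
    rw [hz0, hz1, hN1, Finset.sum_sub_distrib, Finset.sum_const, nsmul_eq_mul]
    ring
  -- the master inequality for arbitrary corners
  rw [hp2, hq2] at hsep
  have hIneq : ∀ α ∈ Set.Icc (0:ℝ) 1, ∀ α' ∈ Set.Icc (0:ℝ) 1,
      0 ≤ t * ((∑ i ∈ q.1, (a i - a c)) + α' * (a b' - a c))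
        - t * ((∑ i ∈ p.1, (a i - a c)) + α * (a b - a c)) := by
    intro α hα α' hα'
    have h1 := hsep _ (hcorner p.1 b c α hα) _ (hcorner q.1 b' c α' hα')
    simp only [mul_sub] at h1
    rw [Finset.sum_sub_distrib] at h1
    rwa [hdot p.1 b c hbc α, hdot q.1 b' c hb'c α'] at h1
  have h01 : (0:ℝ) ∈ Set.Icc (0:ℝ) 1 := ⟨le_refl 0, zero_le_one⟩
  have h11 : (1:ℝ) ∈ Set.Icc (0:ℝ) 1 := ⟨zero_le_one, le_refl 1⟩
  -- case analysis on the combinatorial relation between p.1 and q.1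
  rcases hIc with h1 | h1 | h1 | h1
  · -- A : p.1 = q.1
    have hbb' : b ≠ b' := by
      intro hEq
      apply hpq
      apply Prod.ext h1
      rw [hp2, hq2, hEq]
    have hWq : ∑ i ∈ q.1, (a i - a c) = ∑ i ∈ p.1, (a i - a c) := by rw [h1]
    have i1 := hIneq 1 h11 0 h01
    rw [hWq] at i1
    have s1 : t * (a b - a c) ≤ 0 := by nlinarith [i1]
    have i2 := hIneq 0 h01 1 h11
    rw [hWq] at i2
    have s2 : 0 ≤ t * (a b' - a c) := by nlinarith [i2]
    exact ⟨b, b', c, hbc, hb'c, hbb', mem_univ _, mem_univ _, mem_univ _, subset_univ _,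
      hp2, hq2, hbp1, hcp1, hb'q1,
      Or.inl ⟨h1.symm, sign_lt htx s1 hdb, sign_gt htx s2 hdb'⟩⟩
  · -- B : p.1 = insert b' q.1
    have hb'p1 : b' ∈ p.1 := by rw [h1]; exact mem_insert_self _ _
    have hbb' : b ≠ b' := fun hEq => hbp1 (hEq ▸ hb'p1)
    have hq1eq : q.1 = p.1.erase b' := by
      rw [h1, Finset.erase_insert hb'q1]
    have hWq : ∑ i ∈ q.1, (a i - a c)
        = (∑ i ∈ p.1, (a i - a c)) - (a b' - a c) := by
      rw [hq1eq]; exact Finset.sum_erase_eq_sub hb'p1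
    have i1 := hIneq 1 h11 1 h11
    rw [hWq] at i1
    have s1 : t * (a b - a c) ≤ 0 := by nlinarith [i1]
    have i2 := hIneq 0 h01 0 h01
    rw [hWq] at i2
    have s2 : t * (a b' - a c) ≤ 0 := by nlinarith [i2]
    exact ⟨b, b', c, hbc, hb'c, hbb', mem_univ _, mem_univ _, mem_univ _, subset_univ _,
      hp2, hq2, hbp1, hcp1, hb'q1,
      Or.inr (Or.inl ⟨hb'p1, hq1eq, sign_lt htx s1 hdb, sign_lt htx s2 hdb'⟩)⟩
  · -- C : q.1 = insert b p.1
    have hbq1 : b ∈ q.1 := by rw [h1]; exact mem_insert_self _ _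
    have hbb' : b ≠ b' := fun hEq => hb'q1 (hEq ▸ hbq1)
    have hWq : ∑ i ∈ q.1, (a i - a c)
        = (a b - a c) + ∑ i ∈ p.1, (a i - a c) := by
      rw [h1]; exact Finset.sum_insert hbp1
    have i1 := hIneq 0 h01 0 h01
    rw [hWq] at i1
    have s1 : 0 ≤ t * (a b - a c) := by nlinarith [i1]
    have i2 := hIneq 1 h11 1 h11
    rw [hWq] at i2
    have s2 : 0 ≤ t * (a b' - a c) := by nlinarith [i2]
    exact ⟨b, b', c, hbc, hb'c, hbb', mem_univ _, mem_univ _, mem_univ _, subset_univ _,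
      hp2, hq2, hbp1, hcp1, hb'q1,
      Or.inr (Or.inr (Or.inl ⟨h1, sign_gt htx s1 hdb, sign_gt htx s2 hdb'⟩))⟩
  · -- D : insert b p.1 = insert b' q.1
    have hbb' : b ≠ b' := by
      intro hEq
      apply hpq
      have h1' : insert b p.1 = insert b q.1 := by rw [h1, hEq]
      have hp1q1 : p.1 = q.1 := by
        have e1 : (insert b p.1).erase b = p.1 := Finset.erase_insert hbp1
        have e2 : (insert b q.1).erase b = q.1 :=
          Finset.erase_insert (by rw [← hEq] at hb'q1; exact hb'q1)
        rw [← e1, ← e2, h1']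
      apply Prod.ext hp1q1
      rw [hp2, hq2, hEq]
    have hb'p1 : b' ∈ p.1 := by
      have : b' ∈ insert b p.1 := by rw [h1]; exact mem_insert_self _ _
      rcases mem_insert.mp this with h' | h'
      · exact absurd h'.symm hbb'
      · exact h'
    have hq1eq : q.1 = insert b (p.1.erase b') := by
      have e2 : (insert b' q.1).erase b' = q.1 := Finset.erase_insert hb'q1
      rw [← e2, ← h1]
      ext i
      simp only [Finset.mem_erase, Finset.mem_insert]
      constructor
      · rintro ⟨hi, h' | h'⟩
        · exact Or.inl h'
        · exact Or.inr ⟨hi, h'⟩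
      · rintro (h' | ⟨hi, h'⟩)
        · exact ⟨h' ▸ hbb', Or.inl h'⟩
        · exact ⟨hi, Or.inr h'⟩
    have hbe : b ∉ p.1.erase b' := fun hh => hbp1 (Finset.mem_of_mem_erase hh)
    have hWq : ∑ i ∈ q.1, (a i - a c)
        = (a b - a c) + ((∑ i ∈ p.1, (a i - a c)) - (a b' - a c)) := by
      rw [hq1eq, Finset.sum_insert hbe, Finset.sum_erase_eq_sub hb'p1]
    have i1 := hIneq 0 h01 1 h11
    rw [hWq] at i1
    have s1 : 0 ≤ t * (a b - a c) := by nlinarith [i1]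
    have i2 := hIneq 1 h11 0 h01
    rw [hWq] at i2
    have s2 : t * (a b' - a c) ≤ 0 := by nlinarith [i2]
    exact ⟨b, b', c, hbc, hb'c, hbb', mem_univ _, mem_univ _, mem_univ _, subset_univ _,
      hp2, hq2, hbp1, hcp1, hb'q1,
      Or.inr (Or.inr (Or.inr ⟨hb'p1, hq1eq, sign_gt htx s1 hdb, sign_lt htx s2 hdb'⟩))⟩

end OneDimAux

/-- **Acyclicity in dimension one.**  For any fine zonotopal tiling `P` of `Z(V)`
(regular or not) over a one-dimensional point configuration, and any generic point
`x ∈ ℝ` (distinct from every point defining an internal facet), the directed adjacency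
graph with the orientation induced by `x` is acyclic. -/
theorem one_dim_graph_acyclic (n : ℕ) (a : Fin n → ℝ)
    (P : Finset (Finset (Fin n) × Finset (Fin n)))
    (hP : IsFineZonotopalTiling 1 (fun i => ![a i, 1]) P)
    (x : ℝ)
    (hx : ∀ p ∈ P, ∀ b ∈ p.2,
      (∃ q ∈ P, q ≠ p ∧ ∃ b' ∈ q.2, p.2.erase b = q.2.erase b') →
      ∀ c ∈ p.2.erase b, x ≠ a c) :
    ∀ p, ¬ Relation.TransGen (stepRel1 a P x) p p := by
  intro p hcyc
  exact OneDimAux.abs_acyclic a x Finset.univ p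
    (OneDimAux.transGen_map (fun u v h => OneDimAux.extract hP h) hcyc)
end
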